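/- arXiv:1604.02575 — 7 statements merged into one kernel-verified Lean document; each statement's English description precedes it below -/
import Mathlib

section
/- Let (X, 𝔅) be a measurable space, Λ a σ-finite measure on X, and μ₁, μ₂ probability measures on X, both absolutely continuous with respect to Λ. If h : X → ℝ is measurable with ∫_X h(u)² dμ₁(u) < ∞ and ∫_X h(u)² dμ₂(u) < ∞, then |∫_X h(u) dμ₁(u) − ∫_X h(u) dμ₂(u)| ≤ 2 (∫_X h(u)² dμ₁(u) + ∫_X h(u)² dμ₂(u))^{1/2} · d_H(μ₁, μ₂). -/
open MeasureTheory
open scoped ENNReal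

/-- The Hellinger distance between two measures `μ₁, μ₂`, computed with respect to a
dominating measure `Λ`:
`d_H(μ₁, μ₂) = ( (1/2) ∫ (√(dμ₁/dΛ) − √(dμ₂/dΛ))² dΛ )^{1/2}`. -/
noncomputable def hellingerDist {X : Type*} [MeasurableSpace X]
    (μ₁ μ₂ Λ : Measure X) : ℝ :=
  Real.sqrt ((1 / 2) * ∫ u,
    (Real.sqrt ((μ₁.rnDeriv Λ u).toReal) - Real.sqrt ((μ₂.rnDeriv Λ u).toReal)) ^ 2 ∂Λ)

/-- If `μ₁, μ₂` are probability measures absolutely continuous with respect to a σ-finite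
measure `Λ`, and `h` is square integrable with respect to both, then
`|∫ h dμ₁ − ∫ h dμ₂| ≤ 2 (∫ h² dμ₁ + ∫ h² dμ₂)^{1/2} d_H(μ₁, μ₂)`. -/
theorem abs_integral_sub_le_hellinger
    {X : Type*} [MeasurableSpace X] (Λ μ₁ μ₂ : Measure X) [SigmaFinite Λ]
    [IsProbabilityMeasure μ₁] [IsProbabilityMeasure μ₂]
    (hac₁ : μ₁ ≪ Λ) (hac₂ : μ₂ ≪ Λ)
    (h : X → ℝ) (hmeas : Measurable h)
    (hsq₁ : Integrable (fun u => (h u) ^ 2) μ₁)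
    (hsq₂ : Integrable (fun u => (h u) ^ 2) μ₂) :
    |(∫ u, h u ∂μ₁) - ∫ u, h u ∂μ₂| ≤
      2 * Real.sqrt ((∫ u, (h u) ^ 2 ∂μ₁) + ∫ u, (h u) ^ 2 ∂μ₂) *
        hellingerDist μ₁ μ₂ Λ := by
  classical
  set f₁ : X → ℝ≥0∞ := μ₁.rnDeriv Λ with hf₁def
  set f₂ : X → ℝ≥0∞ := μ₂.rnDeriv Λ with hf₂def
  set a₁ : X → ℝ := fun u => Real.sqrt ((f₁ u).toReal) with ha₁def
  set a₂ : X → ℝ := fun u => Real.sqrt ((f₂ u).toReal) with ha₂def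
  have hmf₁ : Measurable f₁ := Measure.measurable_rnDeriv _ _
  have hmf₂ : Measurable f₂ := Measure.measurable_rnDeriv _ _
  have hma₁ : Measurable a₁ := hmf₁.ennreal_toReal.sqrt
  have hma₂ : Measurable a₂ := hmf₂.ennreal_toReal.sqrt
  have ha₁nn : ∀ u, 0 ≤ a₁ u := fun u => Real.sqrt_nonneg _
  have ha₂nn : ∀ u, 0 ≤ a₂ u := fun u => Real.sqrt_nonneg _
  have ha₁sq : ∀ u, a₁ u ^ 2 = (f₁ u).toReal := fun u => Real.sq_sqrt ENNReal.toReal_nonneg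
  have ha₂sq : ∀ u, a₂ u ^ 2 = (f₂ u).toReal := fun u => Real.sq_sqrt ENNReal.toReal_nonneg
  -- integrability of h with respect to μ₁, μ₂
  have hInt₁ : Integrable h μ₁ :=
    ((memLp_two_iff_integrable_sq hmeas.aestronglyMeasurable).mpr hsq₁).integrable
      (by norm_num)
  have hInt₂ : Integrable h μ₂ :=
    ((memLp_two_iff_integrable_sq hmeas.aestronglyMeasurable).mpr hsq₂).integrable
      (by norm_num)
  have hI₁ : Integrable (fun u => (f₁ u).toReal • h u) Λ :=
    (integrable_rnDeriv_smul_iff hac₁).mpr hInt₁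
  have hI₂ : Integrable (fun u => (f₂ u).toReal • h u) Λ :=
    (integrable_rnDeriv_smul_iff hac₂).mpr hInt₂
  have key : (∫ u, h u ∂μ₁) - ∫ u, h u ∂μ₂
      = ∫ u, ((f₁ u).toReal • h u - (f₂ u).toReal • h u) ∂Λ := by
    rw [integral_sub hI₁ hI₂, integral_rnDeriv_smul hac₁,
      integral_rnDeriv_smul hac₂]
  -- pass to a lintegral bound
  have step1 : |(∫ u, h u ∂μ₁) - ∫ u, h u ∂μ₂|
      ≤ (∫⁻ u, ENNReal.ofReal ‖(f₁ u).toReal • h u - (f₂ u).toReal • h u‖ ∂Λ).toReal := by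
    rw [key, ← Real.norm_eq_abs]
    exact norm_integral_le_lintegral_norm _
  set F : X → ℝ≥0∞ := fun u => ENNReal.ofReal (|h u| * (a₁ u + a₂ u)) with hFdef
  set G : X → ℝ≥0∞ := fun u => ENNReal.ofReal (|a₁ u - a₂ u|) with hGdef
  have hptwise : ∀ u, ENNReal.ofReal ‖(f₁ u).toReal • h u - (f₂ u).toReal • h u‖
      = F u * G u := by
    intro u
    have h1 : ‖(f₁ u).toReal • h u - (f₂ u).toReal • h u‖
        = (|h u| * (a₁ u + a₂ u)) * |a₁ u - a₂ u| := by
      rw [Real.norm_eq_abs, smul_eq_mul, smul_eq_mul, ← sub_mul, abs_mul, ← ha₁sq, ← ha₂sq]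
      have : a₁ u ^ 2 - a₂ u ^ 2 = (a₁ u - a₂ u) * (a₁ u + a₂ u) := by ring
      rw [this, abs_mul, abs_of_nonneg (add_nonneg (ha₁nn u) (ha₂nn u))]
      ring
    rw [h1, ENNReal.ofReal_mul (mul_nonneg (abs_nonneg _)
      (add_nonneg (ha₁nn u) (ha₂nn u)))]
  have hconj : (2 : ℝ).HolderConjugate 2 := by constructor <;> norm_num
  have hmF : AEMeasurable F Λ :=
    (((hmeas.abs.mul (hma₁.add hma₂))).ennreal_ofReal).aemeasurable
  have hmG : AEMeasurable G Λ := ((hma₁.sub hma₂).abs.ennreal_ofReal).aemeasurable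
  have hCS : ∫⁻ u, F u * G u ∂Λ
      ≤ (∫⁻ u, F u ^ (2:ℝ) ∂Λ) ^ (1/2 : ℝ) * (∫⁻ u, G u ^ (2:ℝ) ∂Λ) ^ (1/2 : ℝ) :=
    ENNReal.lintegral_mul_le_Lp_mul_Lq Λ hconj hmF hmG
  -- bound the first factor
  set S : ℝ := (∫ u, (h u) ^ 2 ∂μ₁) + ∫ u, (h u) ^ 2 ∂μ₂ with hSdef
  have hSnn : 0 ≤ S := add_nonneg (integral_nonneg fun u => sq_nonneg _)
    (integral_nonneg fun u => sq_nonneg _)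
  have hFsq : ∀ u, F u ^ (2:ℝ) = ENNReal.ofReal ((|h u| * (a₁ u + a₂ u)) ^ 2) := by
    intro u
    rw [show (2:ℝ) = ((2:ℕ):ℝ) by norm_num, ENNReal.rpow_natCast,
      ← ENNReal.ofReal_pow (mul_nonneg (abs_nonneg _) (add_nonneg (ha₁nn u) (ha₂nn u)))]
  have hfactor1 : (∫⁻ u, F u ^ (2:ℝ) ∂Λ) ≤ ENNReal.ofReal (2 * S) := by
    have hle : ∀ u, F u ^ (2:ℝ)
        ≤ 2 * (ENNReal.ofReal ((h u)^2) * f₁ u + ENNReal.ofReal ((h u)^2) * f₂ u) := by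
      intro u
      rw [hFsq u]
      have h2 : (|h u| * (a₁ u + a₂ u)) ^ 2 ≤ 2 * ((h u)^2 * (f₁ u).toReal + (h u)^2 * (f₂ u).toReal) := by
        have := sq_abs (h u)
        nlinarith [sq_nonneg (a₁ u - a₂ u), ha₁sq u, ha₂sq u, sq_nonneg (h u),
          sq_nonneg (h u * (a₁ u - a₂ u))]
      calc ENNReal.ofReal ((|h u| * (a₁ u + a₂ u)) ^ 2)
          ≤ ENNReal.ofReal (2 * ((h u)^2 * (f₁ u).toReal + (h u)^2 * (f₂ u).toReal)) :=
            ENNReal.ofReal_le_ofReal h2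
        _ ≤ 2 * (ENNReal.ofReal ((h u)^2) * f₁ u + ENNReal.ofReal ((h u)^2) * f₂ u) := by
            rw [ENNReal.ofReal_mul (by norm_num : (0:ℝ) ≤ 2)]
            gcongr
            · norm_num
            rw [ENNReal.ofReal_add (mul_nonneg (sq_nonneg _) ENNReal.toReal_nonneg)
              (mul_nonneg (sq_nonneg _) ENNReal.toReal_nonneg),
              ENNReal.ofReal_mul (sq_nonneg _), ENNReal.ofReal_mul (sq_nonneg _)]
            gcongr <;> exact ENNReal.ofReal_toReal_le
    calc (∫⁻ u, F u ^ (2:ℝ) ∂Λ)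
        ≤ ∫⁻ u, 2 * (ENNReal.ofReal ((h u)^2) * f₁ u + ENNReal.ofReal ((h u)^2) * f₂ u) ∂Λ :=
          lintegral_mono hle
      _ = 2 * ((∫⁻ u, f₁ u * ENNReal.ofReal ((h u)^2) ∂Λ)
            + ∫⁻ u, f₂ u * ENNReal.ofReal ((h u)^2) ∂Λ) := by
          rw [lintegral_const_mul 2 (show Measurable fun u =>
              ENNReal.ofReal ((h u)^2) * f₁ u + ENNReal.ofReal ((h u)^2) * f₂ u from
              (((hmeas.pow_const 2).ennreal_ofReal.mul hmf₁)).add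
              ((hmeas.pow_const 2).ennreal_ofReal.mul hmf₂)),
            lintegral_add_left (show Measurable fun u => ENNReal.ofReal ((h u)^2) * f₁ u from
              (hmeas.pow_const 2).ennreal_ofReal.mul hmf₁)]
          simp_rw [mul_comm]
      _ = 2 * (ENNReal.ofReal (∫ u, (h u)^2 ∂μ₁) + ENNReal.ofReal (∫ u, (h u)^2 ∂μ₂)) := by
          rw [lintegral_rnDeriv_mul hac₁ (hmeas.pow_const 2).ennreal_ofReal.aemeasurable,
            lintegral_rnDeriv_mul hac₂ (hmeas.pow_const 2).ennreal_ofReal.aemeasurable,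
            ofReal_integral_eq_lintegral_ofReal hsq₁ (ae_of_all _ fun u => sq_nonneg _),
            ofReal_integral_eq_lintegral_ofReal hsq₂ (ae_of_all _ fun u => sq_nonneg _)]
      _ = ENNReal.ofReal (2 * S) := by
          rw [hSdef, ENNReal.ofReal_mul (by norm_num : (0:ℝ) ≤ 2),
            ENNReal.ofReal_add (integral_nonneg fun u => sq_nonneg _)
              (integral_nonneg fun u => sq_nonneg _)]
          norm_num
  -- second factor
  set T : ℝ := ∫ u, (a₁ u - a₂ u) ^ 2 ∂Λ with hTdef
  have hTint : Integrable (fun u => (a₁ u - a₂ u) ^ 2) Λ := by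
    have hg : Integrable (fun u => 2 * ((f₁ u).toReal + (f₂ u).toReal)) Λ :=
      ((Measure.integrable_toReal_rnDeriv.add Measure.integrable_toReal_rnDeriv).const_mul 2)
    refine hg.mono ((hma₁.sub hma₂).pow_const 2).aestronglyMeasurable (ae_of_all _ fun u => ?_)
    rw [Real.norm_eq_abs, Real.norm_eq_abs, abs_of_nonneg (sq_nonneg _),
      abs_of_nonneg (by positivity : (0:ℝ) ≤ 2 * ((f₁ u).toReal + (f₂ u).toReal))]
    nlinarith [ha₁sq u, ha₂sq u, sq_nonneg (a₁ u + a₂ u)]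
  have hTnn : 0 ≤ T := integral_nonneg fun u => sq_nonneg _
  have hfactor2 : (∫⁻ u, G u ^ (2:ℝ) ∂Λ) = ENNReal.ofReal T := by
    have : ∀ u, G u ^ (2:ℝ) = ENNReal.ofReal ((a₁ u - a₂ u) ^ 2) := by
      intro u
      rw [show (2:ℝ) = ((2:ℕ):ℝ) by norm_num, ENNReal.rpow_natCast,
        ← ENNReal.ofReal_pow (abs_nonneg _), sq_abs]
    simp_rw [this]
    rw [hTdef, ofReal_integral_eq_lintegral_ofReal hTint (ae_of_all _ fun u => sq_nonneg _)]
  -- put everything together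
  have step2 : (∫⁻ u, ENNReal.ofReal ‖(f₁ u).toReal • h u - (f₂ u).toReal • h u‖ ∂Λ)
      ≤ ENNReal.ofReal ((2 * S) ^ (1/2 : ℝ) * T ^ (1/2 : ℝ)) := by
    calc (∫⁻ u, ENNReal.ofReal ‖(f₁ u).toReal • h u - (f₂ u).toReal • h u‖ ∂Λ)
        = ∫⁻ u, F u * G u ∂Λ := by simp_rw [hptwise]
      _ ≤ (∫⁻ u, F u ^ (2:ℝ) ∂Λ) ^ (1/2 : ℝ) * (∫⁻ u, G u ^ (2:ℝ) ∂Λ) ^ (1/2 : ℝ) := hCS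
      _ ≤ (ENNReal.ofReal (2 * S)) ^ (1/2 : ℝ) * (ENNReal.ofReal T) ^ (1/2 : ℝ) := by
          rw [hfactor2]; gcongr
      _ = ENNReal.ofReal ((2 * S) ^ (1/2 : ℝ) * T ^ (1/2 : ℝ)) := by
          rw [ENNReal.ofReal_rpow_of_nonneg (by positivity) (by norm_num),
            ENNReal.ofReal_rpow_of_nonneg hTnn (by norm_num),
            ← ENNReal.ofReal_mul (by positivity)]
  have step3 : |(∫ u, h u ∂μ₁) - ∫ u, h u ∂μ₂| ≤ (2 * S) ^ (1/2 : ℝ) * T ^ (1/2 : ℝ) := by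
    refine step1.trans ?_
    refine (ENNReal.toReal_mono ENNReal.ofReal_ne_top step2).trans ?_
    rw [ENNReal.toReal_ofReal (by positivity)]
  refine step3.trans (le_of_eq ?_)
  have hH : hellingerDist μ₁ μ₂ Λ = Real.sqrt ((1/2) * T) := rfl
  rw [hH, ← Real.sqrt_eq_rpow, ← Real.sqrt_eq_rpow]
  rw [Real.sqrt_mul (by norm_num : (0:ℝ) ≤ 2), Real.sqrt_mul (by norm_num : (0:ℝ) ≤ 1/2)]
  have h12 : Real.sqrt (1/2) = (Real.sqrt 2)⁻¹ := by
    rw [show (1/2:ℝ) = 2⁻¹ by norm_num, Real.sqrt_inv]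
  have hs2 : Real.sqrt 2 * Real.sqrt 2 = 2 := Real.mul_self_sqrt (by norm_num)
  have h2ne : Real.sqrt 2 ≠ 0 := by positivity
  rw [h12]
  field_simp
  linear_combination (Real.sqrt S * Real.sqrt T) * hs2
end

section
/- Let X and Y be Banach spaces, y ∈ Y fixed, and μ₀ a Borel probability measure on X with ∫_X exp(κ‖u‖_X) dμ₀(u) < ∞ for some κ > 0. Suppose Φ(·;y) : X → ℝ is continuous and satisfies: (i) there exist α₁ with 0 ≤ α₁ ≤ κ and M ∈ ℝ such that Φ(u;y) ≥ M − α₁‖u‖_X for all u ∈ X; (ii) for every r > 0 there is K(r) > 0 such that Φ(u;y) ≤ K(r) whenever ‖u‖_X < r. Then Z(y) := ∫_X exp(−Φ(u;y)) dμ₀(u) satisfies 0 < Z(y) < ∞, and hence the posterior measure μ^y with dμ^y/dμ₀(u) = Z(y)^{-1} exp(−Φ(u;y)) is a well-defined Borel probability measure on X, absolutely continuous with respect to μ₀. -/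
open MeasureTheory

/-- The posterior measure `μ^y` associated with a prior `μ₀` and likelihood potential `Φ`,
defined via Bayes' rule: `dμ^y/dμ₀(u) = Z⁻¹ exp(−Φ(u))` with
`Z = ∫ exp(−Φ(u)) dμ₀(u)`. -/
noncomputable def posteriorMeasure {X : Type*} [MeasurableSpace X]
    (μ₀ : Measure X) (Φ : X → ℝ) : Measure X :=
  μ₀.withDensity fun u =>
    ENNReal.ofReal ((∫ v, Real.exp (-(Φ v)) ∂μ₀)⁻¹ * Real.exp (-(Φ u)))

/-- Existence and uniqueness of the posterior: if the prior `μ₀` has exponential tails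
(`∫ exp(κ‖u‖) dμ₀ < ∞` for some `κ > 0`), and the likelihood potential `Φ(·;y)` is
continuous, bounded below by `M − α₁‖u‖` with `0 ≤ α₁ ≤ κ`, and bounded above on bounded
sets, then `0 < Z(y) < ∞` and the posterior is a well-defined probability measure,
absolutely continuous with respect to `μ₀`. -/
theorem posterior_well_defined
    {X Y : Type*} [NormedAddCommGroup X] [NormedSpace ℝ X] [CompleteSpace X]
    [MeasurableSpace X] [BorelSpace X]
    [NormedAddCommGroup Y] [NormedSpace ℝ Y] [CompleteSpace Y]
    (μ₀ : Measure X) [IsProbabilityMeasure μ₀]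
    (κ : ℝ) (hκ : 0 < κ)
    (hexp : Integrable (fun u => Real.exp (κ * ‖u‖)) μ₀)
    (Φ : X → Y → ℝ) (y : Y)
    (hcont : Continuous fun u => Φ u y)
    (α₁ M : ℝ) (hα₁ : 0 ≤ α₁) (hα₁κ : α₁ ≤ κ)
    (hlb : ∀ u : X, M - α₁ * ‖u‖ ≤ Φ u y)
    (hub : ∀ r > (0 : ℝ), ∃ K > (0 : ℝ), ∀ u : X, ‖u‖ < r → Φ u y ≤ K) :
    Integrable (fun u => Real.exp (-(Φ u y))) μ₀ ∧
    0 < ∫ u, Real.exp (-(Φ u y)) ∂μ₀ ∧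
    IsProbabilityMeasure (posteriorMeasure μ₀ fun u => Φ u y) ∧
    (posteriorMeasure μ₀ fun u => Φ u y) ≪ μ₀ := by
  have hint : Integrable (fun u => Real.exp (-(Φ u y))) μ₀ := by
    have hmeas : AEStronglyMeasurable (fun u => Real.exp (-(Φ u y))) μ₀ :=
      (Real.continuous_exp.comp hcont.neg).aestronglyMeasurable
    refine Integrable.mono (hexp.const_mul (Real.exp (-M))) hmeas ?_
    filter_upwards with u
    have h1 : Real.exp (-(Φ u y)) ≤ Real.exp (-M + α₁ * ‖u‖) := by
      apply Real.exp_le_exp.2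
      have := hlb u; linarith
    have h2 : Real.exp (-M + α₁ * ‖u‖) ≤ Real.exp (-M) * Real.exp (κ * ‖u‖) := by
      rw [← Real.exp_add]
      apply Real.exp_le_exp.2
      nlinarith [norm_nonneg u]
    simp only [Real.norm_eq_abs, abs_of_nonneg (Real.exp_pos _).le,
      abs_of_nonneg (mul_nonneg (Real.exp_pos (-M)).le (Real.exp_pos _).le)]
    exact h1.trans h2
  have hZpos : 0 < ∫ u, Real.exp (-(Φ u y)) ∂μ₀ := by
    have : NeZero μ₀ := ⟨IsProbabilityMeasure.ne_zero μ₀⟩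
    exact integral_exp_pos hint
  set Z := ∫ u, Real.exp (-(Φ u y)) ∂μ₀ with hZ
  refine ⟨hint, hZpos, ?_, ?_⟩
  · constructor
    rw [posteriorMeasure, withDensity_apply _ MeasurableSet.univ,
      Measure.restrict_univ]
    have hnn : 0 ≤ᵐ[μ₀] fun u => Z⁻¹ * Real.exp (-(Φ u y)) := by
      filter_upwards with u
      exact mul_nonneg (inv_nonneg.2 hZpos.le) (Real.exp_pos _).le
    rw [← ofReal_integral_eq_lintegral_ofReal (hint.const_mul Z⁻¹) hnn,
      integral_const_mul, ← hZ, inv_mul_cancel₀ hZpos.ne', ENNReal.ofReal_one]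
  · exact withDensity_absolutelyContinuous _ _
end

section
/- Let X and Y be Banach spaces, r > 0, and μ₀ a Borel probability measure on X with ∫_X exp((α₁ + α₂)‖u‖_X) dμ₀(u) < ∞, where α₁, α₂ ≥ 0. Suppose Φ : X × Y → ℝ is measurable in u and satisfies: (i) there is M ∈ ℝ such that Φ(u;y) ≥ M − α₁‖u‖_X for all u ∈ X and all y with ‖y‖_Y < r; (ii) there is C ∈ ℝ such that |Φ(u;y₁) − Φ(u;y₂)| ≤ exp(α₂‖u‖_X + C) ‖y₁ − y₂‖_Y for all u ∈ X and all y₁, y₂ with ‖y₁‖_Y, ‖y₂‖_Y < r. Then for the normalizing constants Z(y) = ∫_X exp(−Φ(u;y)) dμ₀(u) one has |Z(y) − Z(y')| ≤ exp(C − M) (∫_X exp((α₁ + α₂)‖u‖_X) dμ₀(u)) ‖y − y'‖_Y for all y, y' with ‖y‖_Y, ‖y'‖_Y < r. -/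
open MeasureTheory

private lemma exp_sub_exp_abs_le {x y c : ℝ} (hx : x ≤ c) (hy : y ≤ c) :
    |Real.exp x - Real.exp y| ≤ Real.exp c * |x - y| := by
  wlog h : y ≤ x generalizing x y
  · rw [abs_sub_comm, abs_sub_comm x y]
    exact this hy hx (le_of_not_ge h)
  rw [abs_of_nonneg (sub_nonneg.2 (Real.exp_le_exp.2 h)),
    abs_of_nonneg (sub_nonneg.2 h)]
  have h1 : 1 + (y - x) ≤ Real.exp (y - x) := by
    linarith [Real.add_one_le_exp (y - x)]
  have : Real.exp x - Real.exp y ≤ Real.exp x * (x - y) := by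
    have := mul_le_mul_of_nonneg_left h1 (Real.exp_nonneg x)
    rw [← Real.exp_add] at this
    have hxy : x + (y - x) = y := by ring
    rw [hxy] at this
    nlinarith [Real.exp_nonneg x]
  calc Real.exp x - Real.exp y ≤ Real.exp x * (x - y) := this
    _ ≤ Real.exp c * (x - y) := by
        exact mul_le_mul_of_nonneg_right (Real.exp_le_exp.2 hx) (sub_nonneg.2 h)

/-- Lipschitz continuity of the normalizing constant `Z(y) = ∫ exp(−Φ(u;y)) dμ₀(u)` with
respect to the data: under a lower bound `Φ(u;y) ≥ M − α₁‖u‖` and a local Lipschitz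
estimate in `y` with constant `exp(α₂‖u‖ + C)`, and assuming
`∫ exp((α₁+α₂)‖u‖) dμ₀ < ∞`, one has
`|Z(y) − Z(y')| ≤ exp(C − M) (∫ exp((α₁+α₂)‖u‖) dμ₀) ‖y − y'‖`. -/
theorem normalizing_constant_lipschitz
    {X Y : Type*} [NormedAddCommGroup X] [NormedSpace ℝ X] [CompleteSpace X]
    [MeasurableSpace X] [BorelSpace X]
    [NormedAddCommGroup Y] [NormedSpace ℝ Y] [CompleteSpace Y]
    (μ₀ : Measure X) [IsProbabilityMeasure μ₀]
    (α₁ α₂ : ℝ) (hα₁ : 0 ≤ α₁) (hα₂ : 0 ≤ α₂)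
    (hexp : Integrable (fun u => Real.exp ((α₁ + α₂) * ‖u‖)) μ₀)
    (r : ℝ) (hr : 0 < r)
    (Φ : X → Y → ℝ) (hmeas : ∀ y : Y, Measurable fun u => Φ u y)
    (M : ℝ)
    (hlb : ∀ u : X, ∀ y : Y, ‖y‖ < r → M - α₁ * ‖u‖ ≤ Φ u y)
    (C : ℝ)
    (hlip : ∀ u : X, ∀ y₁ y₂ : Y, ‖y₁‖ < r → ‖y₂‖ < r →
      |Φ u y₁ - Φ u y₂| ≤ Real.exp (α₂ * ‖u‖ + C) * ‖y₁ - y₂‖) :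
    ∀ y y' : Y, ‖y‖ < r → ‖y'‖ < r →
      |(∫ u, Real.exp (-(Φ u y)) ∂μ₀) - ∫ u, Real.exp (-(Φ u y')) ∂μ₀| ≤
        Real.exp (C - M) * (∫ u, Real.exp ((α₁ + α₂) * ‖u‖) ∂μ₀) * ‖y - y'‖ := by
  intro y y' hy hy'
  -- Integrability of both integrands
  have key_int : ∀ z : Y, ‖z‖ < r →
      Integrable (fun u => Real.exp (-(Φ u z))) μ₀ := by
    intro z hz
    refine Integrable.mono' (hexp.const_mul (Real.exp (-M)))
      ((Measurable.neg (hmeas z)).exp.aestronglyMeasurable)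
      (Filter.Eventually.of_forall fun u => ?_)
    rw [Real.norm_eq_abs, abs_of_nonneg (Real.exp_nonneg _), ← Real.exp_add]
    apply Real.exp_le_exp.2
    have := hlb u z hz
    nlinarith [norm_nonneg u]
  have hfy := key_int y hy
  have hfy' := key_int y' hy'
  -- pointwise bound
  have hpt : ∀ u : X,
      |Real.exp (-(Φ u y)) - Real.exp (-(Φ u y'))| ≤
        Real.exp (C - M) * Real.exp ((α₁ + α₂) * ‖u‖) * ‖y - y'‖ := by
    intro u
    have hc1 : -(Φ u y) ≤ α₁ * ‖u‖ - M := by have := hlb u y hy; linarith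
    have hc2 : -(Φ u y') ≤ α₁ * ‖u‖ - M := by have := hlb u y' hy'; linarith
    have h1 := exp_sub_exp_abs_le hc1 hc2
    have h2 : |(-(Φ u y)) - (-(Φ u y'))| = |Φ u y - Φ u y'| := by
      rw [abs_sub_comm]; ring_nf
    rw [h2] at h1
    have h3 := hlip u y y' hy hy'
    calc |Real.exp (-(Φ u y)) - Real.exp (-(Φ u y'))|
        ≤ Real.exp (α₁ * ‖u‖ - M) * |Φ u y - Φ u y'| := h1
      _ ≤ Real.exp (α₁ * ‖u‖ - M) * (Real.exp (α₂ * ‖u‖ + C) * ‖y - y'‖) :=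
          mul_le_mul_of_nonneg_left h3 (Real.exp_nonneg _)
      _ = Real.exp (C - M) * Real.exp ((α₁ + α₂) * ‖u‖) * ‖y - y'‖ := by
          rw [← mul_assoc, ← Real.exp_add, ← Real.exp_add,
            show α₁ * ‖u‖ - M + (α₂ * ‖u‖ + C) = C - M + (α₁ + α₂) * ‖u‖ from by ring]
  calc |(∫ u, Real.exp (-(Φ u y)) ∂μ₀) - ∫ u, Real.exp (-(Φ u y')) ∂μ₀|
      = |∫ u, (Real.exp (-(Φ u y)) - Real.exp (-(Φ u y'))) ∂μ₀| := by
        rw [integral_sub hfy hfy']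
    _ ≤ ∫ u, |Real.exp (-(Φ u y)) - Real.exp (-(Φ u y'))| ∂μ₀ := by
        simpa [Real.norm_eq_abs] using
          norm_integral_le_integral_norm (fun u => Real.exp (-(Φ u y)) - Real.exp (-(Φ u y'))) (μ := μ₀)
    _ ≤ ∫ u, Real.exp (C - M) * Real.exp ((α₁ + α₂) * ‖u‖) * ‖y - y'‖ ∂μ₀ := by
        refine integral_mono ((hfy.sub hfy').abs) ?_ hpt
        exact (hexp.const_mul (Real.exp (C - M))).mul_const _
    _ = Real.exp (C - M) * (∫ u, Real.exp ((α₁ + α₂) * ‖u‖) ∂μ₀) * ‖y - y'‖ := by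
        simp_rw [mul_assoc]
        rw [integral_const_mul, integral_mul_const, ← mul_assoc]
end

section
/- Let X and Y be Banach spaces and μ₀ a Borel probability measure on X satisfying ∫_X exp(κ‖u‖_X) dμ₀(u) < ∞ for a constant κ > 0. Suppose Φ : X × Y → ℝ is measurable in u and there are α₁, α₂ ≥ 0 with κ ≥ α₁ + 2α₂ such that: (i) for every r > 0 there is M(r) ∈ ℝ with Φ(u;y) ≥ M − α₁‖u‖_X for all u ∈ X and all y with ‖y‖_Y < r; (ii) for every r > 0 there is K(r) > 0 with Φ(u;y) ≤ K whenever max(‖u‖_X, ‖y‖_Y) < r; (iii) for every r > 0 there is C(r) ∈ ℝ with |Φ(u;y₁) − Φ(u;y₂)| ≤ exp(α₂‖u‖_X + C) ‖y₁ − y₂‖_Y for all u ∈ X and all y₁, y₂ with ‖y₁‖_Y, ‖y₂‖_Y < r. Then for every r > 0 there exists a constant C(r) > 0 such that for all y, y' ∈ Y with max(‖y‖_Y, ‖y'‖_Y) < r, the posterior measures μ^y and μ^{y'} are well-defined and d_H(μ^y, μ^{y'}) ≤ C ‖y − y'‖_Y. -/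
open MeasureTheory

private lemma exp_sub_exp_le_aux {t s : ℝ} (h : t ≤ s) :
    Real.exp s - Real.exp t ≤ Real.exp s * (s - t) := by
  have he : Real.exp t = Real.exp s * Real.exp (t - s) := by
    rw [← Real.exp_add]; congr 1; ring
  have h2 : Real.exp s * ((t - s) + 1) ≤ Real.exp s * Real.exp (t - s) :=
    mul_le_mul_of_nonneg_left (Real.add_one_le_exp _) (Real.exp_nonneg s)
  rw [← he] at h2
  have h3 : Real.exp s * ((t - s) + 1) = Real.exp s * (t - s) + Real.exp s := by ring
  have h4 : Real.exp s * (s - t) = -(Real.exp s * (t - s)) := by ring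
  linarith

private lemma abs_exp_sub_exp_le' (s t : ℝ) :
    |Real.exp s - Real.exp t| ≤ max (Real.exp s) (Real.exp t) * |s - t| := by
  rcases le_total t s with h | h
  · rw [abs_of_nonneg (sub_nonneg.2 (Real.exp_le_exp.2 h)), abs_of_nonneg (sub_nonneg.2 h)]
    calc Real.exp s - Real.exp t ≤ Real.exp s * (s - t) := exp_sub_exp_le_aux h
      _ ≤ max (Real.exp s) (Real.exp t) * (s - t) :=
        mul_le_mul_of_nonneg_right (le_max_left _ _) (by linarith)
  · rw [abs_sub_comm, abs_sub_comm s t,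
      abs_of_nonneg (sub_nonneg.2 (Real.exp_le_exp.2 h)), abs_of_nonneg (sub_nonneg.2 h)]
    calc Real.exp t - Real.exp s ≤ Real.exp t * (t - s) := exp_sub_exp_le_aux h
      _ ≤ max (Real.exp s) (Real.exp t) * (t - s) :=
        mul_le_mul_of_nonneg_right (le_max_right _ _) (by linarith)

private lemma inv_sqrt_sub_abs_le {m z z' : ℝ} (hm : 0 < m) (hz : m ≤ z) (hz' : m ≤ z') :
    |(Real.sqrt z)⁻¹ - (Real.sqrt z')⁻¹| ≤ |z - z'| / (2 * m * Real.sqrt m) := by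
  have hzp : 0 < z := lt_of_lt_of_le hm hz
  have hz'p : 0 < z' := lt_of_lt_of_le hm hz'
  have hsm : 0 < Real.sqrt m := Real.sqrt_pos.2 hm
  have hsz : 0 < Real.sqrt z := Real.sqrt_pos.2 hzp
  have hsz' : 0 < Real.sqrt z' := Real.sqrt_pos.2 hz'p
  have h1 : Real.sqrt m ≤ Real.sqrt z := Real.sqrt_le_sqrt hz
  have h1' : Real.sqrt m ≤ Real.sqrt z' := Real.sqrt_le_sqrt hz'
  have hzz : Real.sqrt z * Real.sqrt z = z := Real.mul_self_sqrt hzp.le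
  have hzz' : Real.sqrt z' * Real.sqrt z' = z' := Real.mul_self_sqrt hz'p.le
  have hmm : Real.sqrt m * Real.sqrt m = m := Real.mul_self_sqrt hm.le
  -- |1/√z - 1/√z'| = |√z' - √z| / (√z √z')
  have key : (Real.sqrt z)⁻¹ - (Real.sqrt z')⁻¹ =
      (Real.sqrt z' - Real.sqrt z) / (Real.sqrt z * Real.sqrt z') := by
    field_simp
  rw [key, abs_div, abs_of_pos (mul_pos hsz hsz')]
  -- |√z' - √z| * (√z' + √z) = |z' - z|
  have hsum : 0 < Real.sqrt z' + Real.sqrt z := by positivity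
  have hprod : |Real.sqrt z' - Real.sqrt z| * (Real.sqrt z' + Real.sqrt z) = |z' - z| := by
    rw [← abs_of_pos hsum, ← abs_mul]
    congr 1
    linear_combination hzz' - hzz
  have habs : |Real.sqrt z' - Real.sqrt z| = |z - z'| / (Real.sqrt z' + Real.sqrt z) := by
    rw [eq_div_iff hsum.ne', abs_sub_comm z z', ← hprod]
  rw [habs, div_div]
  apply div_le_div_of_nonneg_left (abs_nonneg _) (by positivity)
  calc 2 * m * Real.sqrt m = (Real.sqrt m + Real.sqrt m) * (Real.sqrt m * Real.sqrt m) := by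
        rw [hmm]; ring
    _ ≤ (Real.sqrt z' + Real.sqrt z) * (Real.sqrt z * Real.sqrt z') := by
        apply mul_le_mul (by linarith) (mul_le_mul h1 h1' hsm.le hsz.le) (by positivity)
          (by positivity)

set_option maxHeartbeats 1600000 in
/-- Stability of the posterior with respect to perturbations of the data: if the prior has
exponential tails with constant `κ ≥ α₁ + 2α₂` and `Φ` satisfies the lower bound, local
upper bound and local Lipschitz-in-`y` conditions, then for every `r > 0` there is
`C(r) > 0` with `d_H(μ^y, μ^{y'}) ≤ C ‖y − y'‖` whenever `‖y‖, ‖y'‖ < r`. -/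
theorem posterior_stability
    {X Y : Type*} [NormedAddCommGroup X] [NormedSpace ℝ X] [CompleteSpace X]
    [MeasurableSpace X] [BorelSpace X]
    [NormedAddCommGroup Y] [NormedSpace ℝ Y] [CompleteSpace Y]
    (μ₀ : Measure X) [IsProbabilityMeasure μ₀]
    (κ : ℝ) (hκ : 0 < κ)
    (hexp : Integrable (fun u => Real.exp (κ * ‖u‖)) μ₀)
    (Φ : X → Y → ℝ) (hmeas : ∀ y : Y, Measurable fun u => Φ u y)
    (α₁ α₂ : ℝ) (hα₁ : 0 ≤ α₁) (hα₂ : 0 ≤ α₂) (hκα : α₁ + 2 * α₂ ≤ κ)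
    (hlb : ∀ r > (0 : ℝ), ∃ M : ℝ, ∀ u : X, ∀ y : Y, ‖y‖ < r →
      M - α₁ * ‖u‖ ≤ Φ u y)
    (hub : ∀ r > (0 : ℝ), ∃ K > (0 : ℝ), ∀ u : X, ∀ y : Y,
      max ‖u‖ ‖y‖ < r → Φ u y ≤ K)
    (hlip : ∀ r > (0 : ℝ), ∃ C : ℝ, ∀ u : X, ∀ y₁ y₂ : Y, ‖y₁‖ < r → ‖y₂‖ < r →
      |Φ u y₁ - Φ u y₂| ≤ Real.exp (α₂ * ‖u‖ + C) * ‖y₁ - y₂‖) :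
    ∀ r > (0 : ℝ), ∃ C > (0 : ℝ), ∀ y y' : Y, ‖y‖ < r → ‖y'‖ < r →
      (Integrable (fun u => Real.exp (-(Φ u y))) μ₀ ∧
        0 < ∫ u, Real.exp (-(Φ u y)) ∂μ₀ ∧
        Integrable (fun u => Real.exp (-(Φ u y'))) μ₀ ∧
        0 < ∫ u, Real.exp (-(Φ u y')) ∂μ₀) ∧
      hellingerDist (posteriorMeasure μ₀ fun u => Φ u y)
          (posteriorMeasure μ₀ fun u => Φ u y') μ₀ ≤ C * ‖y - y'‖ := by
  intro r hr
  obtain ⟨M, hM⟩ := hlb r hr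
  obtain ⟨CL, hCL⟩ := hlip r hr
  have hα₁κ : α₁ ≤ κ := by linarith
  -- a radius R ≥ r whose ball has positive mass
  have hR : ∃ R : ℝ, r ≤ R ∧ 0 < μ₀ (Metric.ball (0 : X) R) := by
    by_contra hcon
    push_neg at hcon
    have hnull : ∀ n : ℕ, μ₀ (Metric.ball (0 : X) (r + n)) = 0 := fun n =>
      le_antisymm (hcon _ (by linarith [Nat.cast_nonneg (α := ℝ) n])) zero_le
    have huniv : μ₀ (⋃ n : ℕ, Metric.ball (0 : X) (r + n)) = 0 := measure_iUnion_null hnull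
    have hsub : (Set.univ : Set X) ⊆ ⋃ n : ℕ, Metric.ball (0 : X) (r + n) := by
      intro x _
      obtain ⟨n, hn⟩ := exists_nat_gt ‖x‖
      exact Set.mem_iUnion.2 ⟨n, Metric.mem_ball.2 (by
        rw [dist_zero_right]; linarith)⟩
    have h1 : μ₀ (Set.univ : Set X) = 0 :=
      le_antisymm (huniv ▸ measure_mono hsub) zero_le
    simp [measure_univ] at h1
  obtain ⟨R, hRr, hμR⟩ := hR
  have hR0 : (0 : ℝ) < R := lt_of_lt_of_le hr hRr
  obtain ⟨K, hK0, hKub⟩ := hub R hR0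
  -- basic integrability of exponentials of the norm
  have intExp : ∀ β : ℝ, 0 ≤ β → β ≤ κ →
      Integrable (fun u : X => Real.exp (β * ‖u‖)) μ₀ := by
    intro β hβ0 hβκ
    refine hexp.mono' ((measurable_norm.const_mul β).exp.aestronglyMeasurable) ?_
    filter_upwards with u
    rw [Real.norm_eq_abs, abs_of_nonneg (Real.exp_nonneg _)]
    exact Real.exp_le_exp.2 (mul_le_mul_of_nonneg_right hβκ (norm_nonneg u))
  -- integrability of the likelihood
  have Zint : ∀ y : Y, ‖y‖ < r → Integrable (fun u => Real.exp (-(Φ u y))) μ₀ := by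
    intro y hy
    refine ((hexp.const_mul (Real.exp (-M))).mono'
      ((hmeas y).neg.exp.aestronglyMeasurable) ?_)
    filter_upwards with u
    rw [Real.norm_eq_abs, abs_of_nonneg (Real.exp_nonneg _), ← Real.exp_add]
    apply Real.exp_le_exp.2
    have := hM u y hy
    have h2 : α₁ * ‖u‖ ≤ κ * ‖u‖ := mul_le_mul_of_nonneg_right hα₁κ (norm_nonneg u)
    linarith
  -- uniform lower bound on the normalization constant
  set Zmin : ℝ := Real.exp (-K) * (μ₀ (Metric.ball (0 : X) R)).toReal with hZmin_def
  have hZmin : 0 < Zmin := by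
    apply mul_pos (Real.exp_pos _)
    exact ENNReal.toReal_pos hμR.ne' (measure_ne_top μ₀ _)
  have hZlb : ∀ y : Y, ‖y‖ < r → Zmin ≤ ∫ u, Real.exp (-(Φ u y)) ∂μ₀ := by
    intro y hy
    have hint := Zint y hy
    have h1 : Real.exp (-K) * (μ₀ (Metric.ball (0 : X) R)).toReal ≤
        ∫ u in Metric.ball (0 : X) R, Real.exp (-(Φ u y)) ∂μ₀ := by
      refine setIntegral_ge_of_const_le_real measurableSet_ball (measure_ne_top μ₀ _)
        (fun u hu => ?_) hint.integrableOn
      have hu' : ‖u‖ < R := by rwa [Metric.mem_ball, dist_zero_right] at hu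
      have hΦ : Φ u y ≤ K := hKub u y (max_lt hu' (lt_of_lt_of_le hy hRr))
      exact Real.exp_le_exp.2 (by linarith)
    have h2 : ∫ u in Metric.ball (0 : X) R, Real.exp (-(Φ u y)) ∂μ₀ ≤
        ∫ u, Real.exp (-(Φ u y)) ∂μ₀ :=
      setIntegral_le_integral hint (Filter.Eventually.of_forall fun u => Real.exp_nonneg _)
    exact le_trans h1 h2
  -- the constants
  set Iκ : ℝ := ∫ u, Real.exp (κ * ‖u‖) ∂μ₀ with hIκ_def
  have hIκ0 : 0 ≤ Iκ := integral_nonneg fun u => Real.exp_nonneg _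
  set c₂ : ℝ := Real.exp (CL - M) * Iκ with hc₂_def
  have hc₂0 : 0 ≤ c₂ := mul_nonneg (Real.exp_nonneg _) hIκ0
  set q : ℝ := (c₂ / (2 * Zmin * Real.sqrt Zmin)) ^ 2 with hq_def
  set Dc : ℝ := Zmin⁻¹ * (1 / 2) * Real.exp (2 * CL - M) + 2 * q * Real.exp (-M)
    with hDc_def
  have hDc0 : 0 ≤ Dc := by positivity
  refine ⟨Real.sqrt (Dc * Iκ / 2) + 1, by positivity, ?_⟩
  intro y y' hy hy'
  set d : ℝ := ‖y - y'‖ with hd_def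
  have hd0 : 0 ≤ d := norm_nonneg _
  set Zy : ℝ := ∫ u, Real.exp (-(Φ u y)) ∂μ₀ with hZy_def
  set Zy' : ℝ := ∫ u, Real.exp (-(Φ u y')) ∂μ₀ with hZy'_def
  have hZy : Zmin ≤ Zy := hZlb y hy
  have hZy' : Zmin ≤ Zy' := hZlb y' hy'
  have hZyp : 0 < Zy := lt_of_lt_of_le hZmin hZy
  have hZy'p : 0 < Zy' := lt_of_lt_of_le hZmin hZy'
  refine ⟨⟨Zint y hy, hZyp, Zint y' hy', hZy'p⟩, ?_⟩
  -- Lipschitz bound for the normalization constants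
  have hZdiff : |Zy - Zy'| ≤ c₂ * d := by
    have hiy := Zint y hy
    have hiy' := Zint y' hy'
    have hsub : Zy - Zy' = ∫ u, (Real.exp (-(Φ u y)) - Real.exp (-(Φ u y'))) ∂μ₀ :=
      (integral_sub hiy hiy').symm
    rw [hsub]
    have h1 : |∫ u, (Real.exp (-(Φ u y)) - Real.exp (-(Φ u y'))) ∂μ₀| ≤
        ∫ u, |Real.exp (-(Φ u y)) - Real.exp (-(Φ u y'))| ∂μ₀ := by
      simpa [Real.norm_eq_abs] using
        norm_integral_le_integral_norm (fun u => Real.exp (-(Φ u y)) - Real.exp (-(Φ u y')))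
          (μ := μ₀)
    refine le_trans h1 ?_
    have hptw : ∀ u : X, |Real.exp (-(Φ u y)) - Real.exp (-(Φ u y'))| ≤
        (Real.exp (CL - M) * d) * Real.exp (κ * ‖u‖) := by
      intro u
      have hlow := hM u y hy
      have hlow' := hM u y' hy'
      have hmax : max (Real.exp (-(Φ u y))) (Real.exp (-(Φ u y'))) ≤
          Real.exp (α₁ * ‖u‖ - M) :=
        max_le (Real.exp_le_exp.2 (by linarith)) (Real.exp_le_exp.2 (by linarith))
      have hlipu := hCL u y y' hy hy'
      calc |Real.exp (-(Φ u y)) - Real.exp (-(Φ u y'))|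
          ≤ max (Real.exp (-(Φ u y))) (Real.exp (-(Φ u y'))) * |(-(Φ u y)) - (-(Φ u y'))| :=
            abs_exp_sub_exp_le' _ _
        _ = max (Real.exp (-(Φ u y))) (Real.exp (-(Φ u y'))) * |Φ u y - Φ u y'| := by
            congr 1
            rw [show -(Φ u y) - -(Φ u y') = -(Φ u y - Φ u y') by ring, abs_neg]
        _ ≤ Real.exp (α₁ * ‖u‖ - M) * (Real.exp (α₂ * ‖u‖ + CL) * d) := by
            apply mul_le_mul hmax hlipu (abs_nonneg _) (Real.exp_nonneg _)
        _ = (Real.exp (CL - M) * d) * Real.exp ((α₁ + α₂) * ‖u‖) := by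
            have h1 : Real.exp (CL - M) * Real.exp ((α₁ + α₂) * ‖u‖) =
                Real.exp (α₁ * ‖u‖ - M) * Real.exp (α₂ * ‖u‖ + CL) := by
              rw [← Real.exp_add, ← Real.exp_add]; congr 1; ring
            linear_combination (-d) * h1
        _ ≤ (Real.exp (CL - M) * d) * Real.exp (κ * ‖u‖) := by
            apply mul_le_mul_of_nonneg_left _ (by positivity)
            exact Real.exp_le_exp.2 (mul_le_mul_of_nonneg_right (by linarith) (norm_nonneg u))
    have hint1 : Integrable (fun u => |Real.exp (-(Φ u y)) - Real.exp (-(Φ u y'))|) μ₀ :=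
      ((Zint y hy).sub (Zint y' hy')).abs
    have hint2 : Integrable (fun u => (Real.exp (CL - M) * d) * Real.exp (κ * ‖u‖)) μ₀ :=
      hexp.const_mul _
    calc ∫ u, |Real.exp (-(Φ u y)) - Real.exp (-(Φ u y'))| ∂μ₀
        ≤ ∫ u, (Real.exp (CL - M) * d) * Real.exp (κ * ‖u‖) ∂μ₀ :=
          integral_mono hint1 hint2 hptw
      _ = (Real.exp (CL - M) * d) * Iκ := by rw [integral_const_mul]
      _ = c₂ * d := by rw [hc₂_def]; ring
  -- bound on the difference of inverse square roots of the normalizations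
  have hadiff : |(Real.sqrt Zy)⁻¹ - (Real.sqrt Zy')⁻¹| ≤
      c₂ * d / (2 * Zmin * Real.sqrt Zmin) := by
    refine le_trans (inv_sqrt_sub_abs_le hZmin hZy hZy') ?_
    gcongr
  -- pointwise bound on the Hellinger integrand
  have hptwise : ∀ u : X,
      (Real.sqrt (Zy⁻¹ * Real.exp (-(Φ u y))) - Real.sqrt (Zy'⁻¹ * Real.exp (-(Φ u y')))) ^ 2
        ≤ Dc * d ^ 2 * Real.exp (κ * ‖u‖) := by
    intro u
    set E : ℝ := Real.exp (κ * ‖u‖) with hE_def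
    have hE0 : 0 < E := Real.exp_pos _
    set a : ℝ := (Real.sqrt Zy)⁻¹ with ha_def
    set a' : ℝ := (Real.sqrt Zy')⁻¹ with ha'_def
    set f : ℝ := Real.exp (-(Φ u y) / 2) with hf_def
    set f' : ℝ := Real.exp (-(Φ u y') / 2) with hf'_def
    have hrw : Real.sqrt (Zy⁻¹ * Real.exp (-(Φ u y))) = a * f := by
      rw [Real.sqrt_mul (inv_nonneg.2 hZyp.le), Real.sqrt_inv, ha_def, hf_def, Real.exp_half]
    have hrw' : Real.sqrt (Zy'⁻¹ * Real.exp (-(Φ u y'))) = a' * f' := by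
      rw [Real.sqrt_mul (inv_nonneg.2 hZy'p.le), Real.sqrt_inv, ha'_def, hf'_def, Real.exp_half]
    rw [hrw, hrw']
    -- a² = Zy⁻¹ ≤ Zmin⁻¹
    have ha2 : a ^ 2 ≤ Zmin⁻¹ := by
      rw [ha_def, ← Real.sqrt_inv, Real.sq_sqrt (inv_nonneg.2 hZyp.le)]
      exact inv_anti₀ hZmin hZy
    -- (f - f')² bound
    have hlow := hM u y hy
    have hlow' := hM u y' hy'
    have hfsub : |f - f'| ≤ 1 / 2 * Real.exp ((α₁ * ‖u‖ - M) / 2) *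
        (Real.exp (α₂ * ‖u‖ + CL) * d) := by
      have h1 : max f f' ≤ Real.exp ((α₁ * ‖u‖ - M) / 2) := by
        apply max_le <;> exact Real.exp_le_exp.2 (by linarith)
      have h2 : |(-(Φ u y) / 2) - (-(Φ u y') / 2)| = |Φ u y - Φ u y'| / 2 := by
        rw [show (-(Φ u y) / 2) - (-(Φ u y') / 2) = -(Φ u y - Φ u y') / 2 by ring,
          abs_div, abs_neg, abs_of_pos (by norm_num : (0:ℝ) < 2)]
      calc |f - f'| ≤ max f f' * |(-(Φ u y) / 2) - (-(Φ u y') / 2)| :=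
            abs_exp_sub_exp_le' _ _
        _ = max f f' * (|Φ u y - Φ u y'| / 2) := by rw [h2]
        _ ≤ Real.exp ((α₁ * ‖u‖ - M) / 2) * ((Real.exp (α₂ * ‖u‖ + CL) * d) / 2) := by
            apply mul_le_mul h1 (by linarith [hCL u y y' hy hy']) (by positivity)
              (Real.exp_nonneg _)
        _ = 1 / 2 * Real.exp ((α₁ * ‖u‖ - M) / 2) * (Real.exp (α₂ * ‖u‖ + CL) * d) := by
            ring
    have hB1 : (f - f') ^ 2 ≤ 1 / 4 * Real.exp (2 * CL - M) * E * d ^ 2 := by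
      have h3 : (f - f') ^ 2 ≤ (1 / 2 * Real.exp ((α₁ * ‖u‖ - M) / 2) *
          (Real.exp (α₂ * ‖u‖ + CL) * d)) ^ 2 := by
        rw [← sq_abs]
        exact pow_le_pow_left₀ (abs_nonneg _) hfsub 2
      refine h3.trans ?_
      have hexpand : (1 / 2 * Real.exp ((α₁ * ‖u‖ - M) / 2) *
          (Real.exp (α₂ * ‖u‖ + CL) * d)) ^ 2 =
          1 / 4 * Real.exp (2 * CL - M) * Real.exp ((α₁ + 2 * α₂) * ‖u‖) * d ^ 2 := by
        have h1 : Real.exp ((α₁ * ‖u‖ - M) / 2) * Real.exp ((α₁ * ‖u‖ - M) / 2) *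
            (Real.exp (α₂ * ‖u‖ + CL) * Real.exp (α₂ * ‖u‖ + CL)) =
            Real.exp (2 * CL - M) * Real.exp ((α₁ + 2 * α₂) * ‖u‖) := by
          simp only [← Real.exp_add]; congr 1; ring
        calc (1 / 2 * Real.exp ((α₁ * ‖u‖ - M) / 2) * (Real.exp (α₂ * ‖u‖ + CL) * d)) ^ 2
            = 1 / 4 * (Real.exp ((α₁ * ‖u‖ - M) / 2) * Real.exp ((α₁ * ‖u‖ - M) / 2) *
              (Real.exp (α₂ * ‖u‖ + CL) * Real.exp (α₂ * ‖u‖ + CL))) * d ^ 2 := by ring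
          _ = 1 / 4 * Real.exp (2 * CL - M) * Real.exp ((α₁ + 2 * α₂) * ‖u‖) * d ^ 2 := by
              rw [h1]; ring
      rw [hexpand]
      have h11 : Real.exp ((α₁ + 2 * α₂) * ‖u‖) ≤ E :=
        Real.exp_le_exp.2 (mul_le_mul_of_nonneg_right hκα (norm_nonneg u))
      exact mul_le_mul_of_nonneg_right
        (mul_le_mul_of_nonneg_left h11 (by positivity)) (sq_nonneg d)
    -- (a - a')² bound
    have hB2 : (a - a') ^ 2 ≤ q * d ^ 2 := by
      have h4 : (a - a') ^ 2 ≤ (c₂ * d / (2 * Zmin * Real.sqrt Zmin)) ^ 2 := by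
        rw [← sq_abs]
        exact pow_le_pow_left₀ (abs_nonneg _) hadiff 2
      refine h4.trans_eq ?_
      rw [hq_def, div_pow, div_pow, mul_pow]
      ring
    -- f'² = exp(-(Φ u y')) ≤ exp(-M) * E
    have hf'2 : f' ^ 2 ≤ Real.exp (-M) * E := by
      have h5 : f' ^ 2 = Real.exp (-(Φ u y')) := by
        rw [hf'_def, sq, ← Real.exp_add]; ring_nf
      rw [h5, ← Real.exp_add]
      apply Real.exp_le_exp.2
      have h6 : α₁ * ‖u‖ ≤ κ * ‖u‖ := mul_le_mul_of_nonneg_right hα₁κ (norm_nonneg u)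
      linarith
    -- combine
    have hsplit : (a * f - a' * f') ^ 2 ≤
        2 * (a ^ 2 * (f - f') ^ 2) + 2 * ((a - a') ^ 2 * f' ^ 2) := by
      have hid : 2 * (a ^ 2 * (f - f') ^ 2) + 2 * ((a - a') ^ 2 * f' ^ 2) -
          (a * f - a' * f') ^ 2 = (a * (f - f') - (a - a') * f') ^ 2 := by ring
      linarith [sq_nonneg (a * (f - f') - (a - a') * f'), hid]
    have h7 : a ^ 2 * (f - f') ^ 2 ≤ Zmin⁻¹ * (1 / 4 * Real.exp (2 * CL - M) * E * d ^ 2) :=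
      mul_le_mul ha2 hB1 (sq_nonneg _) (by positivity)
    have h8 : (a - a') ^ 2 * f' ^ 2 ≤ (q * d ^ 2) * (Real.exp (-M) * E) :=
      mul_le_mul hB2 hf'2 (sq_nonneg _) (by positivity)
    calc (a * f - a' * f') ^ 2
        ≤ 2 * (a ^ 2 * (f - f') ^ 2) + 2 * ((a - a') ^ 2 * f' ^ 2) := hsplit
      _ ≤ 2 * (Zmin⁻¹ * (1 / 4 * Real.exp (2 * CL - M) * E * d ^ 2)) +
          2 * ((q * d ^ 2) * (Real.exp (-M) * E)) :=
        add_le_add (mul_le_mul_of_nonneg_left h7 (by norm_num))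
          (mul_le_mul_of_nonneg_left h8 (by norm_num))
      _ = Dc * d ^ 2 * E := by rw [hDc_def]; ring
  -- identify the Radon-Nikodym derivatives
  have hmeasg : ∀ y₀ : Y, Measurable fun u =>
      ENNReal.ofReal ((∫ v, Real.exp (-(Φ v y₀)) ∂μ₀)⁻¹ * Real.exp (-(Φ u y₀))) :=
    fun y₀ => ((hmeas y₀).neg.exp.const_mul _).ennreal_ofReal
  have hrn1 := Measure.rnDeriv_withDensity μ₀ (hmeasg y)
  have hrn2 := Measure.rnDeriv_withDensity μ₀ (hmeasg y')
  -- the Hellinger integrand equals the explicit one a.e.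
  have hae : (fun u => (Real.sqrt (((posteriorMeasure μ₀ fun u => Φ u y).rnDeriv μ₀ u).toReal) -
      Real.sqrt (((posteriorMeasure μ₀ fun u => Φ u y').rnDeriv μ₀ u).toReal)) ^ 2) =ᶠ[ae μ₀]
      (fun u => (Real.sqrt (Zy⁻¹ * Real.exp (-(Φ u y))) -
        Real.sqrt (Zy'⁻¹ * Real.exp (-(Φ u y')))) ^ 2) := by
    filter_upwards [hrn1, hrn2] with u h1 h2
    simp only [posteriorMeasure]
    rw [h1, h2, ← hZy_def, ← hZy'_def,
      ENNReal.toReal_ofReal (mul_nonneg (inv_nonneg.2 hZyp.le) (Real.exp_nonneg _)),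
      ENNReal.toReal_ofReal (mul_nonneg (inv_nonneg.2 hZy'p.le) (Real.exp_nonneg _))]
  -- integrability and integral bound
  have hgmeas : Measurable (fun u => (Real.sqrt (Zy⁻¹ * Real.exp (-(Φ u y))) -
      Real.sqrt (Zy'⁻¹ * Real.exp (-(Φ u y')))) ^ 2) := by
    apply Measurable.pow_const
    exact (((hmeas y).neg.exp.const_mul _).sqrt.sub
      (((hmeas y').neg.exp.const_mul _).sqrt))
  have hgint : Integrable (fun u => (Real.sqrt (Zy⁻¹ * Real.exp (-(Φ u y))) -
      Real.sqrt (Zy'⁻¹ * Real.exp (-(Φ u y')))) ^ 2) μ₀ := by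
    refine (hexp.const_mul (Dc * d ^ 2)).mono' hgmeas.aestronglyMeasurable ?_
    filter_upwards with u
    rw [Real.norm_eq_abs, abs_of_nonneg (sq_nonneg _)]
    exact hptwise u
  have hIbound : ∫ u, (Real.sqrt (Zy⁻¹ * Real.exp (-(Φ u y))) -
      Real.sqrt (Zy'⁻¹ * Real.exp (-(Φ u y')))) ^ 2 ∂μ₀ ≤ Dc * d ^ 2 * Iκ := by
    calc ∫ u, (Real.sqrt (Zy⁻¹ * Real.exp (-(Φ u y))) -
        Real.sqrt (Zy'⁻¹ * Real.exp (-(Φ u y')))) ^ 2 ∂μ₀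
        ≤ ∫ u, Dc * d ^ 2 * Real.exp (κ * ‖u‖) ∂μ₀ :=
          integral_mono hgint (hexp.const_mul _) hptwise
      _ = Dc * d ^ 2 * Iκ := by rw [integral_const_mul]
  -- conclude
  rw [hellingerDist]
  have hint_eq : ∫ u, (Real.sqrt (((posteriorMeasure μ₀ fun u => Φ u y).rnDeriv μ₀ u).toReal) -
      Real.sqrt (((posteriorMeasure μ₀ fun u => Φ u y').rnDeriv μ₀ u).toReal)) ^ 2 ∂μ₀ =
      ∫ u, (Real.sqrt (Zy⁻¹ * Real.exp (-(Φ u y))) -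
        Real.sqrt (Zy'⁻¹ * Real.exp (-(Φ u y')))) ^ 2 ∂μ₀ :=
    integral_congr_ae hae
  rw [hint_eq]
  have hfinal : Real.sqrt ((1 / 2) * ∫ u, (Real.sqrt (Zy⁻¹ * Real.exp (-(Φ u y))) -
      Real.sqrt (Zy'⁻¹ * Real.exp (-(Φ u y')))) ^ 2 ∂μ₀) ≤
      Real.sqrt (Dc * Iκ / 2) * d := by
    have h10 : (1 / 2 : ℝ) * ∫ u, (Real.sqrt (Zy⁻¹ * Real.exp (-(Φ u y))) -
        Real.sqrt (Zy'⁻¹ * Real.exp (-(Φ u y')))) ^ 2 ∂μ₀ ≤ (Dc * Iκ / 2) * d ^ 2 := by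
      have heq : (Dc * Iκ / 2) * d ^ 2 = (1 / 2) * (Dc * d ^ 2 * Iκ) := by ring
      rw [heq]
      linarith [hIbound]
    refine le_trans (Real.sqrt_le_sqrt h10) ?_
    rw [Real.sqrt_mul (by positivity), Real.sqrt_sq hd0]
  calc Real.sqrt ((1 / 2) * ∫ u, (Real.sqrt (Zy⁻¹ * Real.exp (-(Φ u y))) -
      Real.sqrt (Zy'⁻¹ * Real.exp (-(Φ u y')))) ^ 2 ∂μ₀)
      ≤ Real.sqrt (Dc * Iκ / 2) * d := hfinal
    _ ≤ (Real.sqrt (Dc * Iκ / 2) + 1) * d :=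
      mul_le_mul_of_nonneg_right (by linarith [Real.sqrt_nonneg (Dc * Iκ / 2)]) hd0
end

section
/- Let X and Y be Banach spaces, y ∈ Y fixed, and μ₀ a Borel probability measure on X satisfying ∫_X exp(κ‖u‖_X) dμ₀(u) < ∞ for a constant κ > 0. Let Φ and Φ_N (N ∈ ℕ) be potentials X → ℝ, measurable and such that, uniformly in N: (i) there are α₁ ≥ 0 and M ∈ ℝ with Φ(u;y) ≥ M − α₁‖u‖_X and Φ_N(u;y) ≥ M − α₁‖u‖_X for all u ∈ X; (ii) for every r > 0 there is K(r) > 0 with Φ(u;y) ≤ K and Φ_N(u;y) ≤ K whenever ‖u‖_X < r. Suppose further there are α₃ ≥ 0, C ∈ ℝ and a function ψ with ψ(N) → 0 as N → ∞ such that |Φ(u;y) − Φ_N(u;y)| ≤ exp(α₃‖u‖_X + C) ψ(N) for all u ∈ X. If κ ≥ α₁ + 2α₃, then the posterior μ^y and its approximations μ^y_N are well-defined and there exists a constant D, independent of N, such that d_H(μ^y, μ^y_N) ≤ D ψ(N). -/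
open MeasureTheory Filter

/-- Mean value type inequality for `exp`. -/
lemma abs_exp_sub_exp_le (x y c : ℝ) (hx : x ≤ c) (hy : y ≤ c) :
    |Real.exp x - Real.exp y| ≤ Real.exp c * |x - y| := by
  wlog h : y ≤ x generalizing x y
  · rw [abs_sub_comm, abs_sub_comm x y]; exact this y x hy hx (le_of_not_ge h)
  rw [abs_of_nonneg (sub_nonneg.2 (Real.exp_le_exp.2 h)), abs_of_nonneg (sub_nonneg.2 h)]
  have h2 : Real.exp y = Real.exp x * Real.exp (y - x) := by
    rw [← Real.exp_add]; ring_nf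
  have h3 := Real.add_one_le_exp (y - x)
  have h4 : Real.exp x ≤ Real.exp c := Real.exp_le_exp.2 hx
  nlinarith [Real.exp_pos x, sub_nonneg.2 h]

/-- `|√x − √y| · √y ≤ |x − y|` for nonnegative `x, y`. -/
lemma abs_sqrt_sub_sqrt_mul_le (x y : ℝ) (hx : 0 ≤ x) (hy : 0 ≤ y) :
    |Real.sqrt x - Real.sqrt y| * Real.sqrt y ≤ |x - y| := by
  have h1 : |Real.sqrt x - Real.sqrt y| * (Real.sqrt x + Real.sqrt y) = |x - y| := by
    rw [← abs_of_nonneg (add_nonneg (Real.sqrt_nonneg x) (Real.sqrt_nonneg y)), ← abs_mul]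
    congr 1
    have hx2 := Real.sq_sqrt hx
    have hy2 := Real.sq_sqrt hy
    nlinarith
  calc |Real.sqrt x - Real.sqrt y| * Real.sqrt y
      ≤ |Real.sqrt x - Real.sqrt y| * (Real.sqrt x + Real.sqrt y) := by
        apply mul_le_mul_of_nonneg_left _ (abs_nonneg _)
        linarith [Real.sqrt_nonneg x]
    _ = |x - y| := h1

/-- `(ab − a′b′)² ≤ 2(a(b−b′))² + 2((a−a′)b′)²`. -/
lemma sq_sub_mul_le (a b a' b' : ℝ) :
    (a * b - a' * b') ^ 2 ≤ 2 * (a * (b - b')) ^ 2 + 2 * ((a - a') * b') ^ 2 := by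
  nlinarith [sq_nonneg (a * (b - b') - (a - a') * b')]

set_option maxHeartbeats 1000000 in
/-- Consistent approximation of the posterior: if `Φ` and its approximations `Φ_N`
satisfy the lower bound and local upper bound uniformly in `N`, and
`|Φ(u) − Φ_N(u)| ≤ exp(α₃‖u‖ + C) ψ(N)` with `ψ(N) → 0`, and the prior has exponential
tails with `κ ≥ α₁ + 2α₃`, then the posteriors are well-defined and
`d_H(μ^y, μ^y_N) ≤ D ψ(N)` for a constant `D` independent of `N`. -/
theorem posterior_consistent_approximation
    {X Y : Type*} [NormedAddCommGroup X] [NormedSpace ℝ X] [CompleteSpace X]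
    [MeasurableSpace X] [BorelSpace X]
    [NormedAddCommGroup Y] [NormedSpace ℝ Y] [CompleteSpace Y]
    (μ₀ : Measure X) [IsProbabilityMeasure μ₀]
    (κ : ℝ) (hκ : 0 < κ)
    (hexp : Integrable (fun u => Real.exp (κ * ‖u‖)) μ₀)
    (y : Y) (Φ : X → ℝ) (ΦN : ℕ → X → ℝ)
    (hΦmeas : Measurable Φ) (hΦNmeas : ∀ N, Measurable (ΦN N))
    (α₁ M : ℝ) (hα₁ : 0 ≤ α₁)
    (hlb : ∀ u : X, M - α₁ * ‖u‖ ≤ Φ u)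
    (hlbN : ∀ N, ∀ u : X, M - α₁ * ‖u‖ ≤ ΦN N u)
    (hub : ∀ r > (0 : ℝ), ∃ K > (0 : ℝ), ∀ u : X, ‖u‖ < r →
      Φ u ≤ K ∧ ∀ N, ΦN N u ≤ K)
    (α₃ C : ℝ) (hα₃ : 0 ≤ α₃)
    (ψ : ℕ → ℝ) (hψ : Tendsto ψ atTop (nhds 0))
    (happrox : ∀ N, ∀ u : X, |Φ u - ΦN N u| ≤ Real.exp (α₃ * ‖u‖ + C) * ψ N)
    (hκα : α₁ + 2 * α₃ ≤ κ) :
    (Integrable (fun u => Real.exp (-(Φ u))) μ₀ ∧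
      0 < ∫ u, Real.exp (-(Φ u)) ∂μ₀) ∧
    (∀ N, Integrable (fun u => Real.exp (-(ΦN N u))) μ₀ ∧
      0 < ∫ u, Real.exp (-(ΦN N u)) ∂μ₀) ∧
    ∃ D : ℝ, ∀ N,
      hellingerDist (posteriorMeasure μ₀ Φ) (posteriorMeasure μ₀ (ΦN N)) μ₀ ≤
        D * ψ N := by
  -- ψ is nonnegative
  have hψ0 : ∀ N, 0 ≤ ψ N := by
    intro N
    have h := (abs_nonneg (Φ 0 - ΦN N 0)).trans (happrox N 0)
    exact (mul_nonneg_iff_of_pos_left (Real.exp_pos (α₃ * ‖(0 : X)‖ + C))).1 h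
  -- integrability of exponentials of the norm
  have hintc : ∀ c : ℝ, 0 ≤ c → c ≤ κ →
      Integrable (fun u : X => Real.exp (c * ‖u‖)) μ₀ := by
    intro c hc0 hcκ
    refine hexp.mono ?_ ?_
    · exact (Real.measurable_exp.comp (measurable_norm.const_mul c)).aestronglyMeasurable
    · filter_upwards with u
      rw [Real.norm_eq_abs, Real.norm_eq_abs, Real.abs_exp, Real.abs_exp]
      exact Real.exp_le_exp.2 (mul_le_mul_of_nonneg_right hcκ (norm_nonneg u))
  have hE1i := hintc (α₁ + 2 * α₃) (by linarith) (by linarith)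
  have hE2i := hintc α₁ hα₁ (by linarith)
  have hE3i := hintc (α₁ + α₃) (by linarith) (by linarith)
  -- pointwise bounds on the unnormalized densities
  have hΦbd : ∀ u : X, Real.exp (-(Φ u)) ≤ Real.exp (-M) * Real.exp (α₁ * ‖u‖) := by
    intro u
    rw [← Real.exp_add]
    exact Real.exp_le_exp.2 (by linarith [hlb u])
  have hΦNbd : ∀ N, ∀ u : X,
      Real.exp (-(ΦN N u)) ≤ Real.exp (-M) * Real.exp (α₁ * ‖u‖) := by
    intro N u
    rw [← Real.exp_add]
    exact Real.exp_le_exp.2 (by linarith [hlbN N u])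
  -- integrability of the unnormalized densities
  have hintΦ : Integrable (fun u => Real.exp (-(Φ u))) μ₀ := by
    refine (hE2i.const_mul (Real.exp (-M))).mono ?_ ?_
    · exact (Real.measurable_exp.comp hΦmeas.neg).aestronglyMeasurable
    · filter_upwards with u
      rw [Real.norm_eq_abs, Real.norm_eq_abs, Real.abs_exp, abs_of_pos (by positivity)]
      exact hΦbd u
  have hintN : ∀ N, Integrable (fun u => Real.exp (-(ΦN N u))) μ₀ := by
    intro N
    refine (hE2i.const_mul (Real.exp (-M))).mono ?_ ?_
    · exact (Real.measurable_exp.comp (hΦNmeas N).neg).aestronglyMeasurable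
    · filter_upwards with u
      rw [Real.norm_eq_abs, Real.norm_eq_abs, Real.abs_exp, abs_of_pos (by positivity)]
      exact hΦNbd N u
  -- a ball of positive measure
  have hball : ∃ n : ℕ, μ₀ {u : X | ‖u‖ < (n : ℝ) + 1} ≠ 0 := by
    by_contra h
    push_neg at h
    have hU : (⋃ n : ℕ, {u : X | ‖u‖ < (n : ℝ) + 1}) = Set.univ := by
      ext u
      simp only [Set.mem_iUnion, Set.mem_setOf_eq, Set.mem_univ, iff_true]
      obtain ⟨n, hn⟩ := exists_nat_gt ‖u‖
      exact ⟨n, by linarith⟩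
    have h0 := measure_iUnion_null (s := fun n : ℕ => {u : X | ‖u‖ < (n : ℝ) + 1}) h
    rw [hU] at h0
    simp [measure_univ] at h0
  obtain ⟨n, hn⟩ := hball
  obtain ⟨K, hK0, hKbd⟩ := hub ((n : ℝ) + 1) (by positivity)
  set S : Set X := {u : X | ‖u‖ < (n : ℝ) + 1} with hSdef
  have hSmeas : MeasurableSet S := measurableSet_lt measurable_norm measurable_const
  have hμS : 0 < (μ₀ S).toReal := ENNReal.toReal_pos hn (measure_ne_top μ₀ S)
  set z₀ : ℝ := Real.exp (-K) * (μ₀ S).toReal with hz₀def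
  have hz₀pos : 0 < z₀ := by positivity
  -- uniform lower bound on the normalizations
  have hZlow : ∀ g : X → ℝ, Integrable (fun u => Real.exp (-(g u))) μ₀ →
      (∀ u ∈ S, g u ≤ K) → z₀ ≤ ∫ u, Real.exp (-(g u)) ∂μ₀ := by
    intro g hgi hgK
    have h1 : ∫ u in S, Real.exp (-(g u)) ∂μ₀ ≤ ∫ u, Real.exp (-(g u)) ∂μ₀ :=
      setIntegral_le_integral hgi (Filter.Eventually.of_forall fun u => (Real.exp_pos _).le)
    have h2 : Real.exp (-K) * (μ₀ S).toReal ≤ ∫ u in S, Real.exp (-(g u)) ∂μ₀ := by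
      refine setIntegral_ge_of_const_le_real hSmeas (measure_ne_top μ₀ S) ?_ hgi.integrableOn
      intro u hu
      exact Real.exp_le_exp.2 (neg_le_neg (hgK u hu))
    rw [hz₀def]; linarith
  set Z : ℝ := ∫ u, Real.exp (-(Φ u)) ∂μ₀ with hZdef
  have hZlb : z₀ ≤ Z := hZlow Φ hintΦ fun u hu => (hKbd u hu).1
  have hZNlb : ∀ N, z₀ ≤ ∫ u, Real.exp (-(ΦN N u)) ∂μ₀ := fun N =>
    hZlow (ΦN N) (hintN N) fun u hu => (hKbd u hu).2 N
  -- uniform upper bound on the normalizations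
  set E1 : ℝ := ∫ u, Real.exp ((α₁ + 2 * α₃) * ‖u‖) ∂μ₀ with hE1def
  set E2 : ℝ := ∫ u, Real.exp (α₁ * ‖u‖) ∂μ₀ with hE2def
  set E3 : ℝ := ∫ u, Real.exp ((α₁ + α₃) * ‖u‖) ∂μ₀ with hE3def
  have hE1nn : 0 ≤ E1 := integral_nonneg fun u => (Real.exp_pos _).le
  have hE2nn : 0 ≤ E2 := integral_nonneg fun u => (Real.exp_pos _).le
  have hE3nn : 0 ≤ E3 := integral_nonneg fun u => (Real.exp_pos _).le
  set Zm : ℝ := Real.exp (-M) * E2 with hZmdef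
  have hZub : ∀ g : X → ℝ, (∀ u : X, M - α₁ * ‖u‖ ≤ g u) →
      Integrable (fun u => Real.exp (-(g u))) μ₀ →
      (∫ u, Real.exp (-(g u)) ∂μ₀) ≤ Zm := by
    intro g hg hgi
    have h1 : ∫ u, Real.exp (-(g u)) ∂μ₀ ≤
        ∫ u, Real.exp (-M) * Real.exp (α₁ * ‖u‖) ∂μ₀ := by
      refine integral_mono hgi (hE2i.const_mul _) fun u => ?_
      rw [← Real.exp_add]
      exact Real.exp_le_exp.2 (by linarith [hg u])
    rw [integral_const_mul] at h1
    exact h1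
  have hZub' : Z ≤ Zm := hZub Φ hlb hintΦ
  have hZNub : ∀ N, (∫ u, Real.exp (-(ΦN N u)) ∂μ₀) ≤ Zm := fun N =>
    hZub (ΦN N) (hlbN N) (hintN N)
  have hZpos : 0 < Z := lt_of_lt_of_le hz₀pos hZlb
  -- difference of normalizations
  set c₂ : ℝ := Real.exp (C - M) * E3 with hc₂def
  have hc₂nn : 0 ≤ c₂ := by positivity
  have hZdiff : ∀ N, |Z - ∫ u, Real.exp (-(ΦN N u)) ∂μ₀| ≤ c₂ * ψ N := by
    intro N
    rw [hZdef, ← integral_sub hintΦ (hintN N)]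
    have habs : |∫ u, (Real.exp (-(Φ u)) - Real.exp (-(ΦN N u))) ∂μ₀|
        ≤ ∫ u, |Real.exp (-(Φ u)) - Real.exp (-(ΦN N u))| ∂μ₀ := by
      simpa [Real.norm_eq_abs] using
        norm_integral_le_integral_norm (fun u => Real.exp (-(Φ u)) - Real.exp (-(ΦN N u)))
          (μ := μ₀)
    refine habs.trans ?_
    have hstep : ∫ u, |Real.exp (-(Φ u)) - Real.exp (-(ΦN N u))| ∂μ₀
        ≤ ∫ u, (Real.exp (C - M) * ψ N) * Real.exp ((α₁ + α₃) * ‖u‖) ∂μ₀ := by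
      refine integral_mono_of_nonneg (Filter.Eventually.of_forall fun u => abs_nonneg _)
        (hE3i.const_mul _) ?_
      filter_upwards with u
      have h1 := abs_exp_sub_exp_le (-(Φ u)) (-(ΦN N u)) (α₁ * ‖u‖ - M)
        (by linarith [hlb u]) (by linarith [hlbN N u])
      have h2 : |-(Φ u) - -(ΦN N u)| = |Φ u - ΦN N u| := by
        rw [show -(Φ u) - -(ΦN N u) = -(Φ u - ΦN N u) by ring, abs_neg]
      rw [h2] at h1
      have h3 : Real.exp (α₁ * ‖u‖ - M) * |Φ u - ΦN N u|
          ≤ Real.exp (α₁ * ‖u‖ - M) * (Real.exp (α₃ * ‖u‖ + C) * ψ N) :=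
        mul_le_mul_of_nonneg_left (happrox N u) (Real.exp_pos _).le
      have he : Real.exp (α₁ * ‖u‖ - M) * Real.exp (α₃ * ‖u‖ + C)
          = Real.exp (C - M) * Real.exp ((α₁ + α₃) * ‖u‖) := by
        rw [← Real.exp_add, ← Real.exp_add]
        congr 1
        ring
      have h4 : Real.exp (α₁ * ‖u‖ - M) * (Real.exp (α₃ * ‖u‖ + C) * ψ N)
          = (Real.exp (C - M) * ψ N) * Real.exp ((α₁ + α₃) * ‖u‖) := by
        calc Real.exp (α₁ * ‖u‖ - M) * (Real.exp (α₃ * ‖u‖ + C) * ψ N)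
            = (Real.exp (α₁ * ‖u‖ - M) * Real.exp (α₃ * ‖u‖ + C)) * ψ N := by ring
          _ = (Real.exp (C - M) * Real.exp ((α₁ + α₃) * ‖u‖)) * ψ N := by rw [he]
          _ = (Real.exp (C - M) * ψ N) * Real.exp ((α₁ + α₃) * ‖u‖) := by ring
      calc |Real.exp (-(Φ u)) - Real.exp (-(ΦN N u))| ≤ _ := h1
        _ ≤ _ := h3
        _ = _ := h4
    refine hstep.trans ?_
    rw [integral_const_mul, ← hE3def, hc₂def]
    ring_nf
    exact le_refl _
  -- the main conclusion
  refine ⟨⟨hintΦ, hZpos⟩, fun N => ⟨hintN N, lt_of_lt_of_le hz₀pos (hZNlb N)⟩, ?_⟩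
  set γ₀ : ℝ := Real.sqrt Zm * (c₂ / z₀ ^ 2) with hγ₀def
  have hγ₀nn : 0 ≤ γ₀ := by positivity
  set ka : ℝ := (1 / 2) * z₀⁻¹ * Real.exp (2 * C - M) with hkadef
  set kb : ℝ := 2 * γ₀ ^ 2 * Real.exp (-M) with hkbdef
  have hkann : 0 ≤ ka := by positivity
  have hkbnn : 0 ≤ kb := by positivity
  set D₀ : ℝ := ka * E1 + kb * E2 with hD₀def
  have hD₀nn : 0 ≤ D₀ := by positivity
  refine ⟨Real.sqrt ((1 / 2) * D₀), fun N => ?_⟩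
  set ZN : ℝ := ∫ u, Real.exp (-(ΦN N u)) ∂μ₀ with hZNdef
  have hZNpos : 0 < ZN := lt_of_lt_of_le hz₀pos (hZNlb N)
  -- bound on the difference of the square roots of the inverse normalizations
  have hadiff : |Real.sqrt Z⁻¹ - Real.sqrt ZN⁻¹| ≤ γ₀ * ψ N := by
    have h1 := abs_sqrt_sub_sqrt_mul_le Z⁻¹ ZN⁻¹ (inv_nonneg.2 hZpos.le) (inv_nonneg.2 hZNpos.le)
    have hprod : Real.sqrt ZN⁻¹ * Real.sqrt ZN = 1 := by
      rw [← Real.sqrt_mul (inv_nonneg.2 hZNpos.le), inv_mul_cancel₀ hZNpos.ne', Real.sqrt_one]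
    have h2 : |Real.sqrt Z⁻¹ - Real.sqrt ZN⁻¹| ≤ |Z⁻¹ - ZN⁻¹| * Real.sqrt ZN := by
      calc |Real.sqrt Z⁻¹ - Real.sqrt ZN⁻¹|
          = (|Real.sqrt Z⁻¹ - Real.sqrt ZN⁻¹| * Real.sqrt ZN⁻¹) * Real.sqrt ZN := by
            rw [mul_assoc, hprod, mul_one]
        _ ≤ |Z⁻¹ - ZN⁻¹| * Real.sqrt ZN :=
            mul_le_mul_of_nonneg_right h1 (Real.sqrt_nonneg _)
    have h3 : |Z⁻¹ - ZN⁻¹| ≤ c₂ * ψ N / z₀ ^ 2 := by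
      rw [inv_sub_inv hZpos.ne' hZNpos.ne', abs_div]
      refine div_le_div₀ (mul_nonneg hc₂nn (hψ0 N)) ?_ (by positivity) ?_
      · rw [abs_sub_comm]; exact hZdiff N
      · rw [abs_of_pos (mul_pos hZpos hZNpos), sq]
        exact mul_le_mul hZlb (hZNlb N) hz₀pos.le hZpos.le
    have h4 : Real.sqrt ZN ≤ Real.sqrt Zm := Real.sqrt_le_sqrt (hZNub N)
    calc |Real.sqrt Z⁻¹ - Real.sqrt ZN⁻¹| ≤ |Z⁻¹ - ZN⁻¹| * Real.sqrt ZN := h2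
      _ ≤ (c₂ * ψ N / z₀ ^ 2) * Real.sqrt Zm :=
          mul_le_mul h3 h4 (Real.sqrt_nonneg _)
            (div_nonneg (mul_nonneg hc₂nn (hψ0 N)) (sq_nonneg z₀))
      _ = γ₀ * ψ N := by rw [hγ₀def]; ring
  -- the pointwise bound
  have key : ∀ u : X,
      (Real.sqrt (Z⁻¹ * Real.exp (-(Φ u))) - Real.sqrt (ZN⁻¹ * Real.exp (-(ΦN N u)))) ^ 2
        ≤ ka * ψ N ^ 2 * Real.exp ((α₁ + 2 * α₃) * ‖u‖)
          + kb * ψ N ^ 2 * Real.exp (α₁ * ‖u‖) := by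
    intro u
    set A : ℝ := Real.sqrt Z⁻¹ with hA
    set A' : ℝ := Real.sqrt ZN⁻¹ with hA'
    set B : ℝ := Real.exp (-(Φ u) / 2) with hB
    set B' : ℝ := Real.exp (-(ΦN N u) / 2) with hB'
    have hsplit1 : Real.sqrt (Z⁻¹ * Real.exp (-(Φ u))) = A * B := by
      rw [Real.sqrt_mul (inv_nonneg.2 hZpos.le), hA, hB, ← Real.exp_half]
    have hsplit2 : Real.sqrt (ZN⁻¹ * Real.exp (-(ΦN N u))) = A' * B' := by
      rw [Real.sqrt_mul (inv_nonneg.2 hZNpos.le), hA', hB', ← Real.exp_half]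
    rw [hsplit1, hsplit2]
    -- bound on |B - B'|
    set β : ℝ := (1 / 2) * Real.exp ((α₁ * ‖u‖ - M) / 2 + (α₃ * ‖u‖ + C)) * ψ N with hβ
    have hbdiff : |B - B'| ≤ β := by
      have h1 := abs_exp_sub_exp_le (-(Φ u) / 2) (-(ΦN N u) / 2) ((α₁ * ‖u‖ - M) / 2)
        (by linarith [hlb u]) (by linarith [hlbN N u])
      have h2 : |-(Φ u) / 2 - -(ΦN N u) / 2| = |Φ u - ΦN N u| / 2 := by
        rw [show -(Φ u) / 2 - -(ΦN N u) / 2 = -((Φ u - ΦN N u) / 2) by ring, abs_neg,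
          abs_div, abs_of_pos (by norm_num : (0:ℝ) < 2)]
      rw [h2] at h1
      have h3 : Real.exp ((α₁ * ‖u‖ - M) / 2) * (|Φ u - ΦN N u| / 2)
          ≤ Real.exp ((α₁ * ‖u‖ - M) / 2) * (Real.exp (α₃ * ‖u‖ + C) * ψ N / 2) := by
        apply mul_le_mul_of_nonneg_left _ (Real.exp_pos _).le
        linarith [happrox N u]
      have h4 : Real.exp ((α₁ * ‖u‖ - M) / 2) * (Real.exp (α₃ * ‖u‖ + C) * ψ N / 2) = β := by
        rw [hβ, show Real.exp ((α₁ * ‖u‖ - M) / 2) * (Real.exp (α₃ * ‖u‖ + C) * ψ N / 2)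
            = (Real.exp ((α₁ * ‖u‖ - M) / 2) * Real.exp (α₃ * ‖u‖ + C)) * (ψ N / 2) from by
              ring,
          ← Real.exp_add]
        ring
      calc |B - B'| ≤ _ := h1
        _ ≤ _ := h3
        _ = β := h4
    have hβnn : 0 ≤ β := le_trans (abs_nonneg _) hbdiff
    have hBsq : (B - B') ^ 2 ≤ β ^ 2 := sq_le_sq' (by linarith [abs_le.1 hbdiff |>.1])
      (abs_le.1 hbdiff |>.2)
    have hAsq : (A - A') ^ 2 ≤ (γ₀ * ψ N) ^ 2 := sq_le_sq'
      (by linarith [abs_le.1 hadiff |>.1]) (abs_le.1 hadiff |>.2)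
    have hA2 : A ^ 2 ≤ z₀⁻¹ := by
      rw [hA, Real.sq_sqrt (inv_nonneg.2 hZpos.le)]
      exact inv_anti₀ hz₀pos hZlb
    have hB'2 : B' ^ 2 ≤ Real.exp (α₁ * ‖u‖ - M) := by
      rw [hB', sq, ← Real.exp_add]
      apply Real.exp_le_exp.2
      have := hlbN N u
      linarith
    have hsum : (A * B - A' * B') ^ 2
        ≤ 2 * (A * (B - B')) ^ 2 + 2 * ((A - A') * B') ^ 2 := sq_sub_mul_le A B A' B'
    have h1 : (A * (B - B')) ^ 2 ≤ z₀⁻¹ * β ^ 2 := by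
      rw [mul_pow]
      exact mul_le_mul hA2 hBsq (sq_nonneg _) (inv_nonneg.2 hz₀pos.le)
    have h2 : ((A - A') * B') ^ 2 ≤ (γ₀ * ψ N) ^ 2 * Real.exp (α₁ * ‖u‖ - M) := by
      rw [mul_pow]
      exact mul_le_mul hAsq hB'2 (sq_nonneg _) (sq_nonneg _)
    have hexp1 : β ^ 2 = (1 / 4) * (Real.exp ((α₁ + 2 * α₃) * ‖u‖) * Real.exp (2 * C - M))
        * ψ N ^ 2 := by
      have e1 : Real.exp ((α₁ * ‖u‖ - M) / 2 + (α₃ * ‖u‖ + C)) ^ 2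
          = Real.exp ((α₁ + 2 * α₃) * ‖u‖) * Real.exp (2 * C - M) := by
        rw [pow_two, ← Real.exp_add, ← Real.exp_add]
        congr 1
        ring
      calc β ^ 2
          = (1 / 4) * (Real.exp ((α₁ * ‖u‖ - M) / 2 + (α₃ * ‖u‖ + C)) ^ 2) * ψ N ^ 2 := by
            rw [hβ]; ring
        _ = (1 / 4) * (Real.exp ((α₁ + 2 * α₃) * ‖u‖) * Real.exp (2 * C - M)) * ψ N ^ 2 := by
            rw [e1]
    have hexp2 : Real.exp (α₁ * ‖u‖ - M) = Real.exp (α₁ * ‖u‖) * Real.exp (-M) := by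
      rw [← Real.exp_add]; ring_nf
    calc (A * B - A' * B') ^ 2 ≤ 2 * (A * (B - B')) ^ 2 + 2 * ((A - A') * B') ^ 2 := hsum
      _ ≤ 2 * (z₀⁻¹ * β ^ 2) + 2 * ((γ₀ * ψ N) ^ 2 * Real.exp (α₁ * ‖u‖ - M)) :=
          add_le_add (mul_le_mul_of_nonneg_left h1 (by norm_num))
            (mul_le_mul_of_nonneg_left h2 (by norm_num))
      _ = ka * ψ N ^ 2 * Real.exp ((α₁ + 2 * α₃) * ‖u‖)
          + kb * ψ N ^ 2 * Real.exp (α₁ * ‖u‖) := by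
          rw [hexp1, hexp2, hkadef, hkbdef]; ring
  -- the integral bound
  have hGint : Integrable (fun u : X =>
      ka * ψ N ^ 2 * Real.exp ((α₁ + 2 * α₃) * ‖u‖)
        + kb * ψ N ^ 2 * Real.exp (α₁ * ‖u‖)) μ₀ :=
    (hE1i.const_mul _).add (hE2i.const_mul _)
  have hIle : ∫ u, (Real.sqrt (Z⁻¹ * Real.exp (-(Φ u)))
      - Real.sqrt (ZN⁻¹ * Real.exp (-(ΦN N u)))) ^ 2 ∂μ₀ ≤ D₀ * ψ N ^ 2 := by
    have h1 : ∫ u, (Real.sqrt (Z⁻¹ * Real.exp (-(Φ u)))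
        - Real.sqrt (ZN⁻¹ * Real.exp (-(ΦN N u)))) ^ 2 ∂μ₀
        ≤ ∫ u, (ka * ψ N ^ 2 * Real.exp ((α₁ + 2 * α₃) * ‖u‖)
            + kb * ψ N ^ 2 * Real.exp (α₁ * ‖u‖)) ∂μ₀ := by
      refine integral_mono_of_nonneg (Filter.Eventually.of_forall fun u => sq_nonneg _)
        hGint ?_
      filter_upwards with u
      exact key u
    rw [integral_add (hE1i.const_mul _) (hE2i.const_mul _), integral_const_mul,
      integral_const_mul, ← hE1def, ← hE2def] at h1
    calc ∫ u, (Real.sqrt (Z⁻¹ * Real.exp (-(Φ u)))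
        - Real.sqrt (ZN⁻¹ * Real.exp (-(ΦN N u)))) ^ 2 ∂μ₀
        ≤ ka * ψ N ^ 2 * E1 + kb * ψ N ^ 2 * E2 := h1
      _ = D₀ * ψ N ^ 2 := by rw [hD₀def]; ring
  -- identification of the Hellinger distance
  have hmeas1 : Measurable fun u : X =>
      ENNReal.ofReal ((∫ v, Real.exp (-(Φ v)) ∂μ₀)⁻¹ * Real.exp (-(Φ u))) :=
    (measurable_const.mul (Real.measurable_exp.comp hΦmeas.neg)).ennreal_ofReal
  have hmeas2 : Measurable fun u : X =>
      ENNReal.ofReal ((∫ v, Real.exp (-(ΦN N v)) ∂μ₀)⁻¹ * Real.exp (-(ΦN N u))) :=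
    (measurable_const.mul (Real.measurable_exp.comp (hΦNmeas N).neg)).ennreal_ofReal
  have hrd1 := Measure.rnDeriv_withDensity μ₀ hmeas1
  have hrd2 := Measure.rnDeriv_withDensity μ₀ hmeas2
  have hd_eq : hellingerDist (posteriorMeasure μ₀ Φ) (posteriorMeasure μ₀ (ΦN N)) μ₀
      = Real.sqrt ((1 / 2) * ∫ u, (Real.sqrt (Z⁻¹ * Real.exp (-(Φ u)))
          - Real.sqrt (ZN⁻¹ * Real.exp (-(ΦN N u)))) ^ 2 ∂μ₀) := by
    unfold hellingerDist posteriorMeasure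
    congr 2
    apply integral_congr_ae
    filter_upwards [hrd1, hrd2] with u h1 h2
    rw [h1, h2,
      ENNReal.toReal_ofReal (mul_nonneg
        (inv_nonneg.2 (integral_nonneg fun v => (Real.exp_pos _).le)) (Real.exp_pos _).le),
      ENNReal.toReal_ofReal (mul_nonneg
        (inv_nonneg.2 (integral_nonneg fun v => (Real.exp_pos _).le)) (Real.exp_pos _).le),
      ← hZdef, ← hZNdef]
  rw [hd_eq]
  have hle : (1 / 2 : ℝ) * ∫ u, (Real.sqrt (Z⁻¹ * Real.exp (-(Φ u)))
      - Real.sqrt (ZN⁻¹ * Real.exp (-(ΦN N u)))) ^ 2 ∂μ₀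
      ≤ (1 / 2) * D₀ * ψ N ^ 2 := by linarith
  calc Real.sqrt ((1 / 2) * ∫ u, (Real.sqrt (Z⁻¹ * Real.exp (-(Φ u)))
      - Real.sqrt (ZN⁻¹ * Real.exp (-(ΦN N u)))) ^ 2 ∂μ₀)
      ≤ Real.sqrt ((1 / 2) * D₀ * ψ N ^ 2) := Real.sqrt_le_sqrt hle
    _ = Real.sqrt ((1 / 2) * D₀) * ψ N := by
        rw [Real.sqrt_mul (by positivity), Real.sqrt_sq (hψ0 N)]
end

section
/- Let X and Y be Banach spaces, μ₀ a convex Radon probability measure on X, and κ > 0 a constant with ∫_X exp(κ‖u‖_X) dμ₀(u) < ∞. Let Φ : X × Y → ℝ be continuous in u and satisfy, with constants α₁, α₂ ≥ 0 such that κ ≥ α₁ + 2α₂: (i) for every r > 0 there is M(r) ∈ ℝ with Φ(u;y) ≥ M − α₁‖u‖_X for all u ∈ X and all ‖y‖_Y < r; (ii) for every r > 0 there is K(r) > 0 with Φ(u;y) ≤ K whenever max(‖u‖_X, ‖y‖_Y) < r; (iii) for every r > 0 there is L(r) > 0 with |Φ(u₁;y) − Φ(u₂;y)| ≤ L‖u₁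 − u₂‖_X whenever max(‖u₁‖_X, ‖u₂‖_X, ‖y‖_Y) < r; (iv) for every r > 0 there is C(r) ∈ ℝ with |Φ(u;y₁) − Φ(u;y₂)| ≤ exp(α₂‖u‖_X + C)‖y₁ − y₂‖_Y whenever ‖y₁‖_Y, ‖y₂‖_Y < r. Then for every y ∈ Y the normalizing constant Z(y) = ∫_X exp(−Φ(u;y)) dμ₀(u) satisfies 0 < Z(y) < ∞, so the posterior μ^y is a well-defined probability measure; moreover, for every r > 0 there is C(r) > 0 such that d_H(μ^y, μ^{y'}) ≤ C‖y − y'‖_Y whenever max(‖y‖_Y, ‖y'‖_Y) < r. -/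
open MeasureTheory Pointwise

/-- A measure `μ` on a normed space `X` is convex (log-concave) if
`μ(λA + (1−λ)B) ≥ μ(A)^λ μ(B)^{1−λ}` for all `λ ∈ [0,1]` and Borel sets `A, B`. -/
def IsConvexMeasure {X : Type*} [NormedAddCommGroup X] [NormedSpace ℝ X]
    [MeasurableSpace X] (μ : Measure X) : Prop :=
  ∀ A B : Set X, MeasurableSet A → MeasurableSet B →
    ∀ l : ℝ, 0 ≤ l → l ≤ 1 →
      μ A ^ l * μ B ^ (1 - l) ≤ μ (l • A + (1 - l) • B)

private lemma abs_exp_sub_exp_aux (a b : ℝ) :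
    |Real.exp a - Real.exp b| ≤ Real.exp (max a b) * |a - b| := by
  wlog h : b ≤ a with H
  · rw [abs_sub_comm, max_comm, abs_sub_comm a b]; exact H b a (le_of_not_ge h)
  rw [abs_of_nonneg (sub_nonneg.2 (Real.exp_le_exp.2 h)), abs_of_nonneg (sub_nonneg.2 h),
    max_eq_left h]
  have h1 : Real.exp a * Real.exp (b - a) = Real.exp b := by
    rw [← Real.exp_add]; ring_nf
  have h2 := Real.add_one_le_exp (b - a)
  nlinarith [Real.exp_pos a]

private lemma abs_sqrt_sub_sqrt_aux {x y c : ℝ} (hc : 0 < c) (hx : c ≤ Real.sqrt x)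
    (hy : c ≤ Real.sqrt y) : |Real.sqrt x - Real.sqrt y| ≤ |x - y| / (2 * c) := by
  have hx0 : 0 ≤ x := (Real.sqrt_pos.1 (lt_of_lt_of_le hc hx)).le
  have hy0 : 0 ≤ y := (Real.sqrt_pos.1 (lt_of_lt_of_le hc hy)).le
  have h1 : Real.sqrt x ^ 2 = x := Real.sq_sqrt hx0
  have h2 : Real.sqrt y ^ 2 = y := Real.sq_sqrt hy0
  have key : |Real.sqrt x - Real.sqrt y| * (Real.sqrt x + Real.sqrt y) = |x - y| := by
    rw [← abs_of_nonneg (show (0:ℝ) ≤ Real.sqrt x + Real.sqrt y by positivity), ← abs_mul]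
    congr 1
    linear_combination h1 - h2
  rw [le_div_iff₀ (by positivity)]
  calc |Real.sqrt x - Real.sqrt y| * (2 * c)
      ≤ |Real.sqrt x - Real.sqrt y| * (Real.sqrt x + Real.sqrt y) :=
        mul_le_mul_of_nonneg_left (by linarith) (abs_nonneg _)
    _ = |x - y| := key

private lemma exp_sq_aux (a : ℝ) : Real.exp a ^ 2 = Real.exp (2 * a) := by
  rw [sq, ← Real.exp_add]; ring_nf

set_option maxHeartbeats 1000000 in
/-- Well-posedness of Bayesian inverse problems with a convex prior: if `μ₀` is a convex
Radon probability measure with `∫ exp(κ‖u‖) dμ₀ < ∞` for `κ ≥ α₁ + 2α₂` and `Φ`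
satisfies conditions (i)–(iv), then the posterior is a well-defined probability measure
for every `y` and is locally Lipschitz in the data in the Hellinger metric. -/
theorem convex_prior_wellposed
    {X Y : Type*} [NormedAddCommGroup X] [NormedSpace ℝ X] [CompleteSpace X]
    [MeasurableSpace X] [BorelSpace X]
    [NormedAddCommGroup Y] [NormedSpace ℝ Y] [CompleteSpace Y]
    (μ₀ : Measure X) [IsProbabilityMeasure μ₀]
    (hreg : μ₀.InnerRegular) (hconv : IsConvexMeasure μ₀)
    (κ : ℝ) (hκ : 0 < κ)
    (hexp : Integrable (fun u => Real.exp (κ * ‖u‖)) μ₀)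
    (Φ : X → Y → ℝ) (hcont : ∀ y : Y, Continuous fun u => Φ u y)
    (α₁ α₂ : ℝ) (hα₁ : 0 ≤ α₁) (hα₂ : 0 ≤ α₂) (hκα : α₁ + 2 * α₂ ≤ κ)
    (hlb : ∀ r > (0 : ℝ), ∃ M : ℝ, ∀ u : X, ∀ y : Y, ‖y‖ < r →
      M - α₁ * ‖u‖ ≤ Φ u y)
    (hub : ∀ r > (0 : ℝ), ∃ K > (0 : ℝ), ∀ u : X, ∀ y : Y,
      max ‖u‖ ‖y‖ < r → Φ u y ≤ K)
    (hlipu : ∀ r > (0 : ℝ), ∃ L > (0 : ℝ), ∀ u₁ u₂ : X, ∀ y : Y,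
      max (max ‖u₁‖ ‖u₂‖) ‖y‖ < r →
      |Φ u₁ y - Φ u₂ y| ≤ L * ‖u₁ - u₂‖)
    (hlipy : ∀ r > (0 : ℝ), ∃ C : ℝ, ∀ u : X, ∀ y₁ y₂ : Y, ‖y₁‖ < r → ‖y₂‖ < r →
      |Φ u y₁ - Φ u y₂| ≤ Real.exp (α₂ * ‖u‖ + C) * ‖y₁ - y₂‖) :
    (∀ y : Y,
      Integrable (fun u => Real.exp (-(Φ u y))) μ₀ ∧
      0 < ∫ u, Real.exp (-(Φ u y)) ∂μ₀ ∧
      IsProbabilityMeasure (posteriorMeasure μ₀ fun u => Φ u y)) ∧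
    ∀ r > (0 : ℝ), ∃ C > (0 : ℝ), ∀ y y' : Y, ‖y‖ < r → ‖y'‖ < r →
      hellingerDist (posteriorMeasure μ₀ fun u => Φ u y)
          (posteriorMeasure μ₀ fun u => Φ u y') μ₀ ≤ C * ‖y - y'‖ := by
  have hα₁κ : α₁ ≤ κ := by linarith
  set G : ℝ := ∫ u, Real.exp (κ * ‖u‖) ∂μ₀ with hG_def
  have hG0 : 0 ≤ G := integral_nonneg fun u => (Real.exp_pos _).le
  -- Z y := normalizing constant
  set Z : Y → ℝ := fun y => ∫ u, Real.exp (-(Φ u y)) ∂μ₀ with hZ_def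
  -- Integrability for each y
  have hint : ∀ y : Y, Integrable (fun u => Real.exp (-(Φ u y))) μ₀ := by
    intro y
    obtain ⟨M, hM⟩ := hlb (‖y‖ + 1) (by positivity)
    apply Integrable.mono (hexp.const_mul (Real.exp (-M)))
      (((hcont y).neg.rexp).aestronglyMeasurable)
    filter_upwards with u
    rw [Real.norm_eq_abs, Real.norm_eq_abs, abs_of_nonneg (Real.exp_pos _).le,
      abs_of_nonneg (by positivity), ← Real.exp_add]
    apply Real.exp_le_exp.2
    have h1 : α₁ * ‖u‖ ≤ κ * ‖u‖ := mul_le_mul_of_nonneg_right hα₁κ (norm_nonneg u)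
    change -(Φ u y) ≤ _
    linarith [hM u y (by linarith [norm_nonneg y])]
  -- Positivity of Z y
  have hZpos : ∀ y : Y, 0 < Z y := by
    intro y
    rw [hZ_def]
    rw [integral_pos_iff_support_of_nonneg (fun u => (Real.exp_pos _).le) (hint y)]
    have hsupp : (Function.support fun u : X => Real.exp (-(Φ u y))) = Set.univ :=
      Set.eq_univ_of_forall fun u => (Real.exp_pos _).ne'
    rw [hsupp]
    simp
  -- Probability measure
  have hprob : ∀ y : Y, IsProbabilityMeasure (posteriorMeasure μ₀ fun u => Φ u y) := by
    intro y
    constructor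
    rw [posteriorMeasure, withDensity_apply _ MeasurableSet.univ, Measure.restrict_univ]
    rw [← ofReal_integral_eq_lintegral_ofReal ((hint y).const_mul _)
      (ae_of_all _ fun u => mul_nonneg (inv_nonneg.2 (hZpos y).le) (Real.exp_pos _).le)]
    rw [integral_const_mul, inv_mul_cancel₀ (hZpos y).ne', ENNReal.ofReal_one]
  refine ⟨fun y => ⟨hint y, hZpos y, hprob y⟩, ?_⟩
  -- Part 2 : local Lipschitz continuity in Hellinger distance
  intro r hr
  obtain ⟨M, hM⟩ := hlb r hr
  obtain ⟨C₀, hC₀⟩ := hlipy r hr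
  -- some ball around 0 has positive measure
  have hball : ∃ R : ℝ, 0 < R ∧ 0 < μ₀ (Metric.ball (0:X) R) := by
    by_contra h
    push_neg at h
    have hnull : μ₀ (⋃ n : ℕ, Metric.ball (0:X) (n + 1)) = 0 :=
      measure_iUnion_null fun n => le_antisymm (h (n + 1) (by positivity)) zero_le
    rw [Metric.iUnion_ball_nat_succ, measure_univ] at hnull
    exact one_ne_zero hnull
  obtain ⟨R, hR, hμR⟩ := hball
  obtain ⟨K, hK, hKb⟩ := hub (max R r + 1) (by positivity)
  -- lower bound for Z on the ball of radius r
  set Zmin : ℝ := Real.exp (-K) * (μ₀ (Metric.ball (0:X) R)).toReal with hZmin_def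
  have hZmin_pos : 0 < Zmin := by
    apply mul_pos (Real.exp_pos _)
    exact ENNReal.toReal_pos hμR.ne' (measure_ne_top _ _)
  have hZlb : ∀ y : Y, ‖y‖ < r → Zmin ≤ Z y := by
    intro y hy
    have h1 : Real.exp (-K) * (μ₀ (Metric.ball (0:X) R)).toReal
        ≤ ∫ u in Metric.ball (0:X) R, Real.exp (-(Φ u y)) ∂μ₀ := by
      apply setIntegral_ge_of_const_le_real measurableSet_ball (measure_ne_top _ _)
      · intro u hu
        rw [Metric.mem_ball, dist_zero_right] at hu
        apply Real.exp_le_exp.2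
        apply neg_le_neg
        apply hKb u y
        apply max_lt (by linarith [le_max_left R r]) ?_
        · calc ‖y‖ < r := hy
            _ ≤ max R r := le_max_right _ _
            _ < max R r + 1 := by linarith
      · exact (hint y).integrableOn
    have h2 : ∫ u in Metric.ball (0:X) R, Real.exp (-(Φ u y)) ∂μ₀ ≤ Z y :=
      setIntegral_le_integral (hint y) (ae_of_all _ fun u => (Real.exp_pos _).le)
    linarith
  -- uniform upper bound for Z, and pointwise upper bound for the density
  have hptub : ∀ (u : X) (y : Y), ‖y‖ < r →
      Real.exp (-(Φ u y)) ≤ Real.exp (-M) * Real.exp (κ * ‖u‖) := by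
    intro u y hy
    rw [← Real.exp_add]
    apply Real.exp_le_exp.2
    have h1 : α₁ * ‖u‖ ≤ κ * ‖u‖ := mul_le_mul_of_nonneg_right hα₁κ (norm_nonneg u)
    linarith [hM u y hy]
  set Zmax : ℝ := Real.exp (-M) * G with hZmax_def
  have hZub : ∀ y : Y, ‖y‖ < r → Z y ≤ Zmax := by
    intro y hy
    calc Z y ≤ ∫ u, Real.exp (-M) * Real.exp (κ * ‖u‖) ∂μ₀ :=
          integral_mono (hint y) (hexp.const_mul _) fun u => hptub u y hy
      _ = Zmax := by rw [integral_const_mul]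
  have hZmax_pos : 0 < Zmax := lt_of_lt_of_le hZmin_pos
    (le_trans (hZlb 0 (by simpa using hr)) (hZub 0 (by simpa using hr)))
  -- pointwise Lipschitz bound on exp(-Φ) in y
  have hptlip : ∀ (u : X) (y y' : Y), ‖y‖ < r → ‖y'‖ < r →
      |Real.exp (-(Φ u y)) - Real.exp (-(Φ u y'))|
        ≤ Real.exp (C₀ - M) * Real.exp (κ * ‖u‖) * ‖y - y'‖ := by
    intro u y y' hy hy'
    calc |Real.exp (-(Φ u y)) - Real.exp (-(Φ u y'))|
        ≤ Real.exp (max (-(Φ u y)) (-(Φ u y'))) * |(-(Φ u y)) - (-(Φ u y'))| :=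
          abs_exp_sub_exp_aux _ _
      _ ≤ (Real.exp (-M) * Real.exp (α₁ * ‖u‖)) *
            (Real.exp (α₂ * ‖u‖ + C₀) * ‖y - y'‖) := by
          apply mul_le_mul
          · rw [← Real.exp_add]
            apply Real.exp_le_exp.2
            rcases max_cases (-(Φ u y)) (-(Φ u y')) with ⟨he, _⟩ | ⟨he, _⟩ <;> rw [he]
            · linarith [hM u y hy]
            · linarith [hM u y' hy']
          · have := hC₀ u y y' hy hy'
            calc |(-(Φ u y)) - (-(Φ u y'))| = |Φ u y - Φ u y'| := by
                  rw [abs_sub_comm]; ring_nf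
              _ ≤ Real.exp (α₂ * ‖u‖ + C₀) * ‖y - y'‖ := hC₀ u y y' hy hy'
          · exact abs_nonneg _
          · positivity
      _ = (Real.exp (-M) * Real.exp (α₁ * ‖u‖) * Real.exp (α₂ * ‖u‖ + C₀)) * ‖y - y'‖ := by
          ring
      _ ≤ Real.exp (C₀ - M) * Real.exp (κ * ‖u‖) * ‖y - y'‖ := by
          apply mul_le_mul_of_nonneg_right _ (norm_nonneg _)
          rw [← Real.exp_add, ← Real.exp_add, ← Real.exp_add]
          apply Real.exp_le_exp.2
          have h3 : (α₁ + α₂) * ‖u‖ ≤ κ * ‖u‖ :=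
            mul_le_mul_of_nonneg_right (by linarith) (norm_nonneg u)
          nlinarith [norm_nonneg u]
  -- Lipschitz bound for Z
  have hZlip : ∀ (y y' : Y), ‖y‖ < r → ‖y'‖ < r →
      |Z y - Z y'| ≤ Real.exp (C₀ - M) * G * ‖y - y'‖ := by
    intro y y' hy hy'
    have h1 : Z y - Z y' = ∫ u, (Real.exp (-(Φ u y)) - Real.exp (-(Φ u y'))) ∂μ₀ :=
      (integral_sub (hint y) (hint y')).symm
    rw [h1]
    calc |∫ u, (Real.exp (-(Φ u y)) - Real.exp (-(Φ u y'))) ∂μ₀|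
        ≤ ∫ u, |Real.exp (-(Φ u y)) - Real.exp (-(Φ u y'))| ∂μ₀ := by
          simpa [Real.norm_eq_abs] using norm_integral_le_integral_norm (μ := μ₀)
            (fun u => Real.exp (-(Φ u y)) - Real.exp (-(Φ u y')))
      _ ≤ ∫ u, Real.exp (C₀ - M) * ‖y - y'‖ * Real.exp (κ * ‖u‖) ∂μ₀ := by
          apply integral_mono_of_nonneg (ae_of_all _ fun u => abs_nonneg _)
            (hexp.const_mul _)
          filter_upwards with u
          calc |Real.exp (-(Φ u y)) - Real.exp (-(Φ u y'))|
              ≤ Real.exp (C₀ - M) * Real.exp (κ * ‖u‖) * ‖y - y'‖ := hptlip u y y' hy hy'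
            _ = Real.exp (C₀ - M) * ‖y - y'‖ * Real.exp (κ * ‖u‖) := by ring
      _ = Real.exp (C₀ - M) * G * ‖y - y'‖ := by rw [integral_const_mul]; ring
  -- square-root-of-inverse normalizing constants are Lipschitz
  set c : ℝ := Real.sqrt Zmax⁻¹ with hc_def
  have hc : 0 < c := Real.sqrt_pos.2 (inv_pos.2 hZmax_pos)
  have hsq : ∀ y : Y, ‖y‖ < r → c ≤ Real.sqrt (Z y)⁻¹ := by
    intro y hy
    apply Real.sqrt_le_sqrt
    exact inv_anti₀ (hZpos y) (hZub y hy)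
  set Q : ℝ := Real.exp (C₀ - M) * G / Zmin ^ 2 / (2 * c) with hQ_def
  have hQ0 : 0 ≤ Q := by positivity
  have hsqlip : ∀ y y' : Y, ‖y‖ < r → ‖y'‖ < r →
      |Real.sqrt (Z y)⁻¹ - Real.sqrt (Z y')⁻¹| ≤ Q * ‖y - y'‖ := by
    intro y y' hy hy'
    have h1 := abs_sqrt_sub_sqrt_aux hc (hsq y hy) (hsq y' hy')
    have h2 : |(Z y)⁻¹ - (Z y')⁻¹| ≤ Real.exp (C₀ - M) * G * ‖y - y'‖ / Zmin ^ 2 := by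
      rw [inv_sub_inv (hZpos y).ne' (hZpos y').ne', abs_div]
      apply div_le_div₀ (by positivity) ?_ (by positivity) ?_
      · rw [abs_sub_comm]
        exact hZlip y y' hy hy'
      · rw [abs_of_nonneg (by positivity : (0:ℝ) ≤ Z y * Z y')]
        have := hZlb y hy
        have := hZlb y' hy'
        nlinarith
    calc |Real.sqrt (Z y)⁻¹ - Real.sqrt (Z y')⁻¹|
        ≤ |(Z y)⁻¹ - (Z y')⁻¹| / (2 * c) := h1
      _ ≤ (Real.exp (C₀ - M) * G * ‖y - y'‖ / Zmin ^ 2) / (2 * c) := by gcongr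
      _ = Q * ‖y - y'‖ := by rw [hQ_def]; ring
  -- the density functions and a.e. identification of the Radon-Nikodym derivatives
  have hd : ∀ y : Y, (posteriorMeasure μ₀ fun u => Φ u y).rnDeriv μ₀ =ᵐ[μ₀]
      fun u => ENNReal.ofReal ((Z y)⁻¹ * Real.exp (-(Φ u y))) := by
    intro y
    exact Measure.rnDeriv_withDensity μ₀
      ((ENNReal.continuous_ofReal.comp (continuous_const.mul ((hcont y).neg.rexp))).measurable)
  -- the global constant
  set D₀ : ℝ := 2 * Zmin⁻¹ * (Real.exp (2 * C₀ - M) / 4) + 2 * Q ^ 2 * Real.exp (-M)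
    with hD₀_def
  have hD₀ : 0 ≤ D₀ := by positivity
  refine ⟨Real.sqrt (1 / 2 * D₀ * G) + 1, by positivity, ?_⟩
  intro y y' hy hy'
  set t : ℝ := ‖y - y'‖ with ht_def
  have ht0 : 0 ≤ t := norm_nonneg _
  set A : ℝ := Real.sqrt (Z y)⁻¹ with hA_def
  set B : ℝ := Real.sqrt (Z y')⁻¹ with hB_def
  -- a.e. identification of the Hellinger integrand
  have hae : ∀ᵐ u ∂μ₀,
      (Real.sqrt (((posteriorMeasure μ₀ fun u => Φ u y).rnDeriv μ₀ u).toReal)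
        - Real.sqrt (((posteriorMeasure μ₀ fun u => Φ u y').rnDeriv μ₀ u).toReal)) ^ 2
      = (A * Real.exp (-(Φ u y) / 2) - B * Real.exp (-(Φ u y') / 2)) ^ 2 := by
    filter_upwards [hd y, hd y'] with u h1 h2
    rw [h1, h2,
      ENNReal.toReal_ofReal (mul_nonneg (inv_nonneg.2 (hZpos y).le) (Real.exp_pos _).le),
      ENNReal.toReal_ofReal (mul_nonneg (inv_nonneg.2 (hZpos y').le) (Real.exp_pos _).le),
      Real.sqrt_mul (inv_nonneg.2 (hZpos y).le), Real.sqrt_mul (inv_nonneg.2 (hZpos y').le),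
      ← Real.exp_half, ← Real.exp_half]
  -- pointwise bound on the identified integrand
  have hpt : ∀ u : X,
      (A * Real.exp (-(Φ u y) / 2) - B * Real.exp (-(Φ u y') / 2)) ^ 2
        ≤ D₀ * t ^ 2 * Real.exp (κ * ‖u‖) := by
    intro u
    set p : ℝ := Real.exp (-(Φ u y) / 2) with hp_def
    set q : ℝ := Real.exp (-(Φ u y') / 2) with hq_def
    have hA2 : A ^ 2 = (Z y)⁻¹ := Real.sq_sqrt (inv_nonneg.2 (hZpos y).le)
    have hA2le : A ^ 2 ≤ Zmin⁻¹ := by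
      rw [hA2]; exact inv_anti₀ hZmin_pos (hZlb y hy)
    -- bound on |p - q|
    have hpq : |p - q| ≤ Real.exp ((α₁ * ‖u‖ - M) / 2) *
        ((1 / 2) * (Real.exp (α₂ * ‖u‖ + C₀) * t)) := by
      calc |p - q| ≤ Real.exp (max (-(Φ u y) / 2) (-(Φ u y') / 2)) *
            |(-(Φ u y) / 2) - (-(Φ u y') / 2)| := abs_exp_sub_exp_aux _ _
        _ ≤ Real.exp ((α₁ * ‖u‖ - M) / 2) * ((1 / 2) * (Real.exp (α₂ * ‖u‖ + C₀) * t)) := by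
            apply mul_le_mul
            · apply Real.exp_le_exp.2
              exact max_le (by linarith [hM u y hy]) (by linarith [hM u y' hy'])
            · have h3 : |(-(Φ u y) / 2) - (-(Φ u y') / 2)| = (1 / 2) * |Φ u y - Φ u y'| := by
                rw [show (-(Φ u y) / 2) - (-(Φ u y') / 2) = -((Φ u y - Φ u y') / 2) by ring,
                  abs_neg, abs_div, abs_two]
                ring
              rw [h3]
              have := hC₀ u y y' hy hy'
              nlinarith [abs_nonneg (Φ u y - Φ u y')]
            · exact abs_nonneg _
            · positivity
    have hpq2 : (p - q) ^ 2 ≤ Real.exp (2 * C₀ - M) / 4 * Real.exp (κ * ‖u‖) * t ^ 2 := by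
      have h4 : (p - q) ^ 2 ≤ (Real.exp ((α₁ * ‖u‖ - M) / 2) *
          ((1 / 2) * (Real.exp (α₂ * ‖u‖ + C₀) * t))) ^ 2 := by
        rw [← sq_abs]
        exact pow_le_pow_left₀ (abs_nonneg _) hpq 2
      have h5 : (Real.exp ((α₁ * ‖u‖ - M) / 2) *
          ((1 / 2) * (Real.exp (α₂ * ‖u‖ + C₀) * t))) ^ 2
          = Real.exp (α₁ * ‖u‖ - M) * Real.exp (2 * (α₂ * ‖u‖ + C₀)) * t ^ 2 / 4 := by
        rw [mul_pow, mul_pow, mul_pow, exp_sq_aux, exp_sq_aux]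
        rw [show 2 * ((α₁ * ‖u‖ - M) / 2) = α₁ * ‖u‖ - M by ring]
        ring
      have h6 : Real.exp (α₁ * ‖u‖ - M) * Real.exp (2 * (α₂ * ‖u‖ + C₀))
          ≤ Real.exp (2 * C₀ - M) * Real.exp (κ * ‖u‖) := by
        rw [← Real.exp_add, ← Real.exp_add]
        apply Real.exp_le_exp.2
        have h7 : (α₁ + 2 * α₂) * ‖u‖ ≤ κ * ‖u‖ :=
          mul_le_mul_of_nonneg_right hκα (norm_nonneg u)
        nlinarith [norm_nonneg u]
      nlinarith [sq_nonneg t, Real.exp_pos (α₁ * ‖u‖ - M), Real.exp_pos (2 * (α₂ * ‖u‖ + C₀))]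
    have hq2 : q ^ 2 ≤ Real.exp (-M) * Real.exp (κ * ‖u‖) := by
      rw [hq_def, exp_sq_aux, show 2 * (-(Φ u y') / 2) = -(Φ u y') by ring]
      exact hptub u y' hy'
    have hAB2 : (A - B) ^ 2 ≤ (Q * t) ^ 2 := by
      rw [← sq_abs]
      exact pow_le_pow_left₀ (abs_nonneg _) (hsqlip y y' hy hy') 2
    have e1 : (A * p - B * q) ^ 2 ≤ 2 * (A ^ 2 * (p - q) ^ 2) + 2 * ((A - B) ^ 2 * q ^ 2) := by
      nlinarith [sq_nonneg (A * (p - q) - (A - B) * q)]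
    have e2 : A ^ 2 * (p - q) ^ 2
        ≤ Zmin⁻¹ * (Real.exp (2 * C₀ - M) / 4 * Real.exp (κ * ‖u‖) * t ^ 2) :=
      mul_le_mul hA2le hpq2 (sq_nonneg _) (by positivity)
    have e3 : (A - B) ^ 2 * q ^ 2 ≤ (Q * t) ^ 2 * (Real.exp (-M) * Real.exp (κ * ‖u‖)) :=
      mul_le_mul hAB2 hq2 (sq_nonneg _) (by positivity)
    have e4 : 2 * (Zmin⁻¹ * (Real.exp (2 * C₀ - M) / 4 * Real.exp (κ * ‖u‖) * t ^ 2))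
        + 2 * ((Q * t) ^ 2 * (Real.exp (-M) * Real.exp (κ * ‖u‖)))
        = D₀ * t ^ 2 * Real.exp (κ * ‖u‖) := by
      rw [hD₀_def]; ring
    clear_value A B p q t Q D₀ Zmin Zmax c G Z
    linarith [e1, e2, e3, e4]
  -- conclude
  rw [hellingerDist, integral_congr_ae hae]
  have hIle : ∫ u, (A * Real.exp (-(Φ u y) / 2) - B * Real.exp (-(Φ u y') / 2)) ^ 2 ∂μ₀
      ≤ D₀ * t ^ 2 * G := by
    calc ∫ u, (A * Real.exp (-(Φ u y) / 2) - B * Real.exp (-(Φ u y') / 2)) ^ 2 ∂μ₀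
        ≤ ∫ u, D₀ * t ^ 2 * Real.exp (κ * ‖u‖) ∂μ₀ :=
          integral_mono_of_nonneg (ae_of_all _ fun u => sq_nonneg _)
            (hexp.const_mul _) (ae_of_all _ hpt)
      _ = D₀ * t ^ 2 * G := integral_const_mul _ _
  calc Real.sqrt (1 / 2 * ∫ u,
        (A * Real.exp (-(Φ u y) / 2) - B * Real.exp (-(Φ u y') / 2)) ^ 2 ∂μ₀)
      ≤ Real.sqrt (1 / 2 * D₀ * G * t ^ 2) := by
        apply Real.sqrt_le_sqrt
        nlinarith
    _ = Real.sqrt (1 / 2 * D₀ * G) * t := by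
        rw [Real.sqrt_mul (by positivity), Real.sqrt_sq ht0]
    _ ≤ (Real.sqrt (1 / 2 * D₀ * G) + 1) * t := by
        apply mul_le_mul_of_nonneg_right _ ht0
        linarith
end

section
/- Let X be a Banach space, m a positive integer, Γ an m × m positive definite real matrix, and write ‖v‖_Γ = ‖Γ^{-1/2} v‖₂ for v ∈ ℝ^m. Suppose 𝒢 : X → ℝ^m satisfies: (a) there exist ε > 0 and M ∈ ℝ with ‖𝒢(u)‖_Γ ≤ exp(ε‖u‖_X + M) for all u ∈ X; (b) for every r > 0 there is K(r) > 0 with ‖𝒢(u₁) − 𝒢(u₂)‖_Γ ≤ K‖u₁ − u₂‖_X whenever max(‖u₁‖_X, ‖u₂‖_X) < r. Then the potential Φ(u;y) = (1/2)‖𝒢(u) − y‖_Γ² satisfies: (i) Φ(u;y) ≥ 0 for all u, y; (ii) for every r > 0 there is K(r) > 0 with Φ(u;y) ≤ K whenever max(‖u‖_X, ‖y‖₂) < r; (iii) for every r > 0 there is L(r) > 0 with |Φ(u₁;y) − Φ(u₂;y)| ≤ L‖u₁ − u₂‖_X whenever max(‖u₁‖_X, ‖u₂‖_X, ‖y‖₂)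 < r; (iv) there exists α₂ ≥ 0 such that for every r > 0 there is C(r) ∈ ℝ with |Φ(u;y₁) − Φ(u;y₂)| ≤ exp(α₂‖u‖_X + C)‖y₁ − y₂‖₂ for all u ∈ X and all y₁, y₂ with max(‖y₁‖₂, ‖y₂‖₂) < r. -/
open MeasureTheory Matrix

set_option maxHeartbeats 1000000
set_option synthInstance.maxHeartbeats 1000000

/-- The Euclidean norm on `ℝ^m`. -/
noncomputable def euclNorm {m : ℕ} (v : Fin m → ℝ) : ℝ :=
  Real.sqrt (∑ i, (v i) ^ 2)

/-- The weighted norm `‖v‖_Γ = ‖Γ^{-1/2} v‖₂` induced by a positive definite matrix `Γ`,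
where `Γ^{-1/2}` is the inverse of the positive definite square root of `Γ`. -/
noncomputable def gammaNorm {m : ℕ} (Γ : Matrix (Fin m) (Fin m) ℝ) (hΓ : Γ.PosDef)
    (v : Fin m → ℝ) : ℝ :=
  euclNorm ((hΓ.posSemidef.1.eigenvectorUnitary.1 *
    diagonal ((↑) ∘ (√·) ∘ hΓ.posSemidef.1.eigenvalues) *
    (star hΓ.posSemidef.1.eigenvectorUnitary : Matrix (Fin m) (Fin m) ℝ))⁻¹ *ᵥ v)

lemma euclNorm_eq_norm {m : ℕ} (v : Fin m → ℝ) :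
    euclNorm v = ‖(WithLp.equiv 2 (Fin m → ℝ)).symm v‖ := by
  rw [EuclideanSpace.norm_eq]
  simp [euclNorm, Real.norm_eq_abs, sq_abs]

lemma euclNorm_nonneg {m : ℕ} (v : Fin m → ℝ) : 0 ≤ euclNorm v :=
  Real.sqrt_nonneg _

lemma euclNorm_neg {m : ℕ} (v : Fin m → ℝ) : euclNorm (-v) = euclNorm v := by
  rw [euclNorm_eq_norm, euclNorm_eq_norm]
  simpa using norm_neg ((WithLp.equiv 2 (Fin m → ℝ)).symm v)

lemma gammaNorm_eq_norm {m : ℕ} (Γ : Matrix (Fin m) (Fin m) ℝ) (hΓ : Γ.PosDef)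
    (v : Fin m → ℝ) :
    gammaNorm Γ hΓ v
      = ‖(WithLp.equiv 2 (Fin m → ℝ)).symm ((hΓ.posSemidef.1.eigenvectorUnitary.1 *
    diagonal ((↑) ∘ (√·) ∘ hΓ.posSemidef.1.eigenvalues) *
    (star hΓ.posSemidef.1.eigenvectorUnitary : Matrix (Fin m) (Fin m) ℝ))⁻¹ *ᵥ v)‖ := by
  rw [gammaNorm, euclNorm_eq_norm]

lemma gammaNorm_nonneg {m : ℕ} (Γ : Matrix (Fin m) (Fin m) ℝ) (hΓ : Γ.PosDef)
    (v : Fin m → ℝ) : 0 ≤ gammaNorm Γ hΓ v := by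
  rw [gammaNorm_eq_norm]; exact norm_nonneg _

lemma gammaNorm_add_le {m : ℕ} (Γ : Matrix (Fin m) (Fin m) ℝ) (hΓ : Γ.PosDef)
    (v w : Fin m → ℝ) :
    gammaNorm Γ hΓ (v + w) ≤ gammaNorm Γ hΓ v + gammaNorm Γ hΓ w := by
  rw [gammaNorm_eq_norm, gammaNorm_eq_norm, gammaNorm_eq_norm, Matrix.mulVec_add]
  rw [WithLp.equiv_symm_apply, WithLp.toLp_add]
  exact norm_add_le _ _

lemma gammaNorm_neg {m : ℕ} (Γ : Matrix (Fin m) (Fin m) ℝ) (hΓ : Γ.PosDef)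
    (v : Fin m → ℝ) : gammaNorm Γ hΓ (-v) = gammaNorm Γ hΓ v := by
  rw [gammaNorm_eq_norm, gammaNorm_eq_norm, Matrix.mulVec_neg]
  simpa using norm_neg ((WithLp.equiv 2 (Fin m → ℝ)).symm ((hΓ.posSemidef.1.eigenvectorUnitary.1 *
    diagonal ((↑) ∘ (√·) ∘ hΓ.posSemidef.1.eigenvalues) *
    (star hΓ.posSemidef.1.eigenvectorUnitary : Matrix (Fin m) (Fin m) ℝ))⁻¹ *ᵥ v))

lemma abs_gammaNorm_sub_gammaNorm_le {m : ℕ} (Γ : Matrix (Fin m) (Fin m) ℝ)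
    (hΓ : Γ.PosDef) (v w : Fin m → ℝ) :
    |gammaNorm Γ hΓ v - gammaNorm Γ hΓ w| ≤ gammaNorm Γ hΓ (v - w) := by
  simp only [gammaNorm_eq_norm, Matrix.mulVec_sub]
  rw [WithLp.equiv_symm_apply, WithLp.toLp_sub]
  exact abs_norm_sub_norm_le _ _

lemma gammaNorm_le_const {m : ℕ} (Γ : Matrix (Fin m) (Fin m) ℝ) (hΓ : Γ.PosDef) :
    ∃ c > (0 : ℝ), ∀ v : Fin m → ℝ, gammaNorm Γ hΓ v ≤ c * euclNorm v := by
  set A := (hΓ.posSemidef.1.eigenvectorUnitary.1 *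
    diagonal ((↑) ∘ (√·) ∘ hΓ.posSemidef.1.eigenvalues) *
    (star hΓ.posSemidef.1.eigenvectorUnitary : Matrix (Fin m) (Fin m) ℝ))⁻¹
  let L : EuclideanSpace ℝ (Fin m) →ₗ[ℝ] EuclideanSpace ℝ (Fin m) := Matrix.toEuclideanLin A
  let Lc := LinearMap.toContinuousLinearMap L
  refine ⟨‖Lc‖ + 1, by positivity, fun v => ?_⟩
  have h := Lc.le_opNorm ((WithLp.equiv 2 (Fin m → ℝ)).symm v)
  have h2 : gammaNorm Γ hΓ v ≤ ‖Lc‖ * euclNorm v := by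
    rw [gammaNorm_eq_norm, euclNorm_eq_norm]
    simpa [Lc, L, Matrix.toEuclideanLin_apply] using h
  nlinarith [euclNorm_nonneg v]

lemma half_sq_diff_le {a b B d : ℝ} (ha : 0 ≤ a) (hb : 0 ≤ b) (haB : a ≤ B)
    (hbB : b ≤ B) (hd : |a - b| ≤ d) :
    |(1 / 2) * a ^ 2 - (1 / 2) * b ^ 2| ≤ B * d := by
  rw [abs_le] at hd ⊢
  constructor <;> nlinarith [hd.1, hd.2]

/-- If the forward map `𝒢 : X → ℝ^m` is exponentially bounded and locally Lipschitz,
then the Gaussian likelihood potential `Φ(u;y) = ½‖𝒢(u) − y‖_Γ²` satisfies: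
(i) nonnegativity, (ii) boundedness above on bounded sets, (iii) local Lipschitz
continuity in `u`, and (iv) Lipschitz continuity in `y` with constant
`exp(α₂‖u‖ + C(r))`. -/
theorem gaussian_potential_satisfies_assumptions
    {X : Type*} [NormedAddCommGroup X] [NormedSpace ℝ X] [CompleteSpace X]
    (m : ℕ) (hm : 0 < m)
    (Γ : Matrix (Fin m) (Fin m) ℝ) (hΓ : Γ.PosDef)
    (G : X → Fin m → ℝ)
    (ha : ∃ ε > (0 : ℝ), ∃ M : ℝ, ∀ u : X,
      gammaNorm Γ hΓ (G u) ≤ Real.exp (ε * ‖u‖ + M))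
    (hb : ∀ r > (0 : ℝ), ∃ K > (0 : ℝ), ∀ u₁ u₂ : X,
      max ‖u₁‖ ‖u₂‖ < r →
      gammaNorm Γ hΓ (G u₁ - G u₂) ≤ K * ‖u₁ - u₂‖) :
    (∀ (u : X) (y : Fin m → ℝ),
      0 ≤ (1 / 2) * (gammaNorm Γ hΓ (G u - y)) ^ 2) ∧
    (∀ r > (0 : ℝ), ∃ K > (0 : ℝ), ∀ (u : X) (y : Fin m → ℝ),
      max ‖u‖ (euclNorm y) < r →
      (1 / 2) * (gammaNorm Γ hΓ (G u - y)) ^ 2 ≤ K) ∧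
    (∀ r > (0 : ℝ), ∃ L > (0 : ℝ), ∀ (u₁ u₂ : X) (y : Fin m → ℝ),
      max (max ‖u₁‖ ‖u₂‖) (euclNorm y) < r →
      |(1 / 2) * (gammaNorm Γ hΓ (G u₁ - y)) ^ 2 -
        (1 / 2) * (gammaNorm Γ hΓ (G u₂ - y)) ^ 2| ≤ L * ‖u₁ - u₂‖) ∧
    (∃ α₂ ≥ (0 : ℝ), ∀ r > (0 : ℝ), ∃ C : ℝ, ∀ (u : X) (y₁ y₂ : Fin m → ℝ),
      max (euclNorm y₁) (euclNorm y₂) < r →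
      |(1 / 2) * (gammaNorm Γ hΓ (G u - y₁)) ^ 2 -
        (1 / 2) * (gammaNorm Γ hΓ (G u - y₂)) ^ 2| ≤
        Real.exp (α₂ * ‖u‖ + C) * euclNorm (y₁ - y₂)) := by
  obtain ⟨ε, hε, M, hGa⟩ := ha
  obtain ⟨c, hc, hcle⟩ := gammaNorm_le_const Γ hΓ
  -- general bound on gammaNorm (G u - y)
  have key : ∀ (u : X) (y : Fin m → ℝ),
      gammaNorm Γ hΓ (G u - y) ≤ Real.exp (ε * ‖u‖ + M) + c * euclNorm y := by
    intro u y
    have h1 : gammaNorm Γ hΓ (G u - y) ≤ gammaNorm Γ hΓ (G u) + gammaNorm Γ hΓ (-y) := by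
      have := gammaNorm_add_le Γ hΓ (G u) (-y)
      simpa [sub_eq_add_neg] using this
    rw [gammaNorm_neg] at h1
    exact h1.trans (add_le_add (hGa u) (hcle y))
  have keyB : ∀ r > (0 : ℝ), ∀ (u : X) (y : Fin m → ℝ), ‖u‖ < r → euclNorm y < r →
      gammaNorm Γ hΓ (G u - y) ≤ Real.exp (ε * r + M) + c * r := by
    intro r hr u y hu hy
    refine (key u y).trans (add_le_add ?_ ?_)
    · exact Real.exp_le_exp.mpr (by nlinarith)
    · nlinarith
  refine ⟨?_, ?_, ?_, ?_⟩
  · intro u y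
    positivity
  · -- (ii) bounded above
    intro r hr
    set B := Real.exp (ε * r + M) + c * r with hB
    have hBpos : 0 < B := by positivity
    refine ⟨(1 / 2) * B ^ 2, by positivity, fun u y hmax => ?_⟩
    have hu := lt_of_le_of_lt (le_max_left _ _) hmax
    have hy := lt_of_le_of_lt (le_max_right _ _) hmax
    have h := keyB r hr u y hu hy
    have h0 := gammaNorm_nonneg Γ hΓ (G u - y)
    nlinarith
  · -- (iii) locally Lipschitz in u
    intro r hr
    obtain ⟨K, hK, hKle⟩ := hb r hr
    set B := Real.exp (ε * r + M) + c * r with hB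
    have hBpos : 0 < B := by positivity
    refine ⟨B * K, by positivity, fun u₁ u₂ y hmax => ?_⟩
    have hu₁ : ‖u₁‖ < r :=
      lt_of_le_of_lt ((le_max_left _ _).trans (le_max_left _ _)) hmax
    have hu₂ : ‖u₂‖ < r :=
      lt_of_le_of_lt ((le_max_right _ _).trans (le_max_left _ _)) hmax
    have hy : euclNorm y < r := lt_of_le_of_lt (le_max_right _ _) hmax
    have h1 := keyB r hr u₁ y hu₁ hy
    have h2 := keyB r hr u₂ y hu₂ hy
    have hd : |gammaNorm Γ hΓ (G u₁ - y) - gammaNorm Γ hΓ (G u₂ - y)|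
        ≤ K * ‖u₁ - u₂‖ := by
      have h3 := abs_gammaNorm_sub_gammaNorm_le Γ hΓ (G u₁ - y) (G u₂ - y)
      have h4 : G u₁ - y - (G u₂ - y) = G u₁ - G u₂ := by abel
      rw [h4] at h3
      exact h3.trans (hKle u₁ u₂ (max_lt hu₁ hu₂))
    have := half_sq_diff_le (gammaNorm_nonneg Γ hΓ (G u₁ - y))
      (gammaNorm_nonneg Γ hΓ (G u₂ - y)) h1 h2 hd
    calc |(1 / 2) * (gammaNorm Γ hΓ (G u₁ - y)) ^ 2 -
        (1 / 2) * (gammaNorm Γ hΓ (G u₂ - y)) ^ 2| ≤ B * (K * ‖u₁ - u₂‖) := this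
      _ = B * K * ‖u₁ - u₂‖ := by ring
  · -- (iv) Lipschitz in y
    refine ⟨ε, le_of_lt hε, fun r hr => ?_⟩
    refine ⟨Real.log (c * (Real.exp M + c * r)), fun u y₁ y₂ hmax => ?_⟩
    have hy₁ : euclNorm y₁ < r := lt_of_le_of_lt (le_max_left _ _) hmax
    have hy₂ : euclNorm y₂ < r := lt_of_le_of_lt (le_max_right _ _) hmax
    set a := gammaNorm Γ hΓ (G u - y₁)
    set b := gammaNorm Γ hΓ (G u - y₂)
    set B := Real.exp (ε * ‖u‖ + M) + c * r with hBdef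
    have hBpos : 0 < B := by positivity
    have h1 : a ≤ B := by
      refine (key u y₁).trans ?_
      have : c * euclNorm y₁ ≤ c * r := by nlinarith
      linarith
    have h2 : b ≤ B := by
      refine (key u y₂).trans ?_
      have : c * euclNorm y₂ ≤ c * r := by nlinarith
      linarith
    have hd : |a - b| ≤ c * euclNorm (y₁ - y₂) := by
      have h3 := abs_gammaNorm_sub_gammaNorm_le Γ hΓ (G u - y₁) (G u - y₂)
      have h4 : G u - y₁ - (G u - y₂) = -(y₁ - y₂) := by abel
      rw [h4, gammaNorm_neg] at h3
      exact h3.trans (hcle _)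
    have hmain := half_sq_diff_le (gammaNorm_nonneg Γ hΓ (G u - y₁))
      (gammaNorm_nonneg Γ hΓ (G u - y₂)) h1 h2 hd
    refine hmain.trans ?_
    have hexp1 : (1 : ℝ) ≤ Real.exp (ε * ‖u‖) :=
      Real.one_le_exp (by positivity)
    have hBle : B * c ≤ Real.exp (ε * ‖u‖ + Real.log (c * (Real.exp M + c * r))) := by
      rw [Real.exp_add, Real.exp_log (by positivity)]
      have : B ≤ Real.exp (ε * ‖u‖) * (Real.exp M + c * r) := by
        rw [hBdef, Real.exp_add]
        nlinarith [hexp1, mul_pos hc hr]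
      nlinarith
    have hEnn := euclNorm_nonneg (y₁ - y₂)
    calc B * (c * euclNorm (y₁ - y₂)) = (B * c) * euclNorm (y₁ - y₂) := by ring
      _ ≤ Real.exp (ε * ‖u‖ + Real.log (c * (Real.exp M + c * r))) * euclNorm (y₁ - y₂) := by
          exact mul_le_mul_of_nonneg_right hBle hEnn
end
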